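/- arXiv:1603.03862 — 4 statements merged into one kernel-verified Lean document; each statement's English description precedes it below -/
import Mathlib

section
/- Let R > 0 and let v be a continuous function on the punctured disk {z ∈ ℝ² : 0 < |z| < R} such that v(z)/log(1/|z|) → m₁ as |z| → 0⁺ for some real number m₁, and suppose the conformal metric e^{2v}(dx²+dy²) is complete at the puncture, in the sense that for every C¹ curve γ : [0,1) → {0 < |z| < R} with γ(t) → 0 as t → 1⁻ one has ∫₀¹ e^{v(γ(t))}‖γ′(t)‖ dt = ∞. Then m₁ ≥ 1. (Equivalently: if m₁ < 1, then for sufficiently small r_s > 0 the radial segment t ↦ (t,0), 0 < t ≤ r_s, has finite length ∫₀^{r_s} e^{v(t,0)} dt < ∞.) -/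
open MeasureTheory Filter
open scoped ENNReal

/-- If the conformal metric `e^{2v}(dx²+dy²)` on a punctured disk `{0 < |z| < R} ⊆ ℝ²`
is complete at the puncture (every `C¹` curve tending to the puncture has infinite
length) and `v(z)/log(1/|z|) → m₁` as `|z| → 0⁺`, then `m₁ ≥ 1`. -/
theorem completeness_forces_growth_rate
    (R : ℝ) (hR : 0 < R)
    (v : EuclideanSpace ℝ (Fin 2) → ℝ) (m₁ : ℝ)
    (hcont : ContinuousOn v {z | 0 < ‖z‖ ∧ ‖z‖ < R})
    (hasymp : Tendsto (fun z => v z / Real.log (1 / ‖z‖))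
      (nhdsWithin (0 : EuclideanSpace ℝ (Fin 2)) {0}ᶜ) (nhds m₁))
    (hcomplete : ∀ γ : ℝ → EuclideanSpace ℝ (Fin 2),
      ContDiffOn ℝ 1 γ (Set.Ico 0 1) →
      (∀ t ∈ Set.Ico (0:ℝ) 1, 0 < ‖γ t‖ ∧ ‖γ t‖ < R) →
      Tendsto γ (nhdsWithin 1 (Set.Iio 1)) (nhds 0) →
      ∫⁻ t in Set.Ioo (0:ℝ) 1, ENNReal.ofReal (Real.exp (v (γ t)) * ‖deriv γ t‖) = ⊤) :
    1 ≤ m₁ := by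
  by_contra hlt
  push_neg at hlt
  -- choose m with m₁ < m < 1 and 0 < m
  set m : ℝ := max ((m₁ + 1) / 2) (1 / 2) with hm_def
  have hm1 : m < 1 := by
    apply max_lt <;> linarith
  have hm0 : 0 < m := lt_of_lt_of_le (by norm_num) (le_max_right _ _)
  have hm₁m : m₁ < m := lt_of_lt_of_le (by linarith) (le_max_left _ _)
  -- eventually v z / log (1/‖z‖) < m
  have hev : ∀ᶠ z in nhdsWithin (0 : EuclideanSpace ℝ (Fin 2)) {0}ᶜ,
      v z / Real.log (1 / ‖z‖) < m := hasymp.eventually (eventually_lt_nhds hm₁m)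
  obtain ⟨δ, hδ0, hδ'⟩ := Metric.mem_nhdsWithin_iff.mp hev
  have hδ : ∀ z : EuclideanSpace ℝ (Fin 2), dist z 0 < δ → z ≠ 0 →
      v z / Real.log (1 / ‖z‖) < m := fun z h1 h2 =>
    hδ' ⟨Metric.mem_ball.mpr h1, h2⟩
  -- pick r
  set r : ℝ := min (min δ R) 1 / 2 with hr_def
  have hr0 : 0 < r := by
    apply div_pos _ (by norm_num)
    exact lt_min (lt_min hδ0 hR) one_pos
  have hrδ : r < δ := by
    have : min (min δ R) 1 ≤ δ := le_trans (min_le_left _ _) (min_le_left _ _)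
    linarith
  have hrR : r < R := by
    have : min (min δ R) 1 ≤ R := le_trans (min_le_left _ _) (min_le_right _ _)
    linarith
  have hr1 : r < 1 := by
    have : min (min δ R) 1 ≤ 1 := min_le_right _ _
    linarith
  -- the curve
  set e : EuclideanSpace ℝ (Fin 2) := EuclideanSpace.single 0 1 with he_def
  have hne : ‖e‖ = 1 := by simp [he_def, EuclideanSpace.norm_single]
  set γ : ℝ → EuclideanSpace ℝ (Fin 2) := fun t => (r * (1 - t)) • e with hγ_def
  have hγnorm : ∀ t, ‖γ t‖ = r * |1 - t| := by
    intro t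
    simp [hγ_def, norm_smul, hne, abs_mul, abs_of_pos hr0]
  have hγsmooth : ContDiff ℝ 1 γ := by
    exact (contDiff_const.mul (contDiff_const.sub contDiff_id)).smul contDiff_const
  have hγderiv : ∀ t, deriv γ t = (-r) • e := by
    intro t
    have h : HasDerivAt (fun t : ℝ => r * (1 - t)) (-r) t := by
      simpa using ((hasDerivAt_id t).const_sub 1).const_mul r
    exact (h.smul_const e).deriv
  have hγmem : ∀ t ∈ Set.Ico (0:ℝ) 1, 0 < ‖γ t‖ ∧ ‖γ t‖ < R := by
    intro t ht
    rw [hγnorm, abs_of_pos (by linarith [ht.2])]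
    constructor
    · exact mul_pos hr0 (by linarith [ht.2])
    · nlinarith [ht.1, ht.2]
  have hγtend : Tendsto γ (nhdsWithin 1 (Set.Iio 1)) (nhds 0) := by
    have hc : Continuous γ := hγsmooth.continuous
    have := (hc.tendsto 1).mono_left (nhdsWithin_le_nhds (s := Set.Iio 1))
    simpa [hγ_def] using this
  -- the pointwise bound
  have hbound : ∀ t ∈ Set.Ioo (0:ℝ) 1,
      Real.exp (v (γ t)) * ‖deriv γ t‖ ≤ (r * (1 - t)) ^ (-m) * r := by
    intro t ht
    have h1t : 0 < 1 - t := by linarith [ht.2]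
    have hnγ : ‖γ t‖ = r * (1 - t) := by
      rw [hγnorm, abs_of_pos h1t]
    have hγpos : 0 < ‖γ t‖ := by rw [hnγ]; positivity
    have hγlt1 : ‖γ t‖ < 1 := by
      rw [hnγ]; nlinarith [ht.1]
    have hγne0 : γ t ≠ 0 := by
      intro h; rw [h] at hγpos; simp at hγpos
    have hlog : 0 < Real.log (1 / ‖γ t‖) := by
      rw [one_div, Real.log_inv]
      have := Real.log_neg hγpos hγlt1
      linarith
    have hvd : v (γ t) / Real.log (1 / ‖γ t‖) < m := by
      apply hδ
      · rw [dist_zero_right]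
        calc ‖γ t‖ = r * (1 - t) := hnγ
        _ ≤ r := by nlinarith [ht.1]
        _ < δ := hrδ
      · exact hγne0
    have hv : v (γ t) ≤ m * Real.log (1 / ‖γ t‖) := by
      have := (div_lt_iff₀ hlog).mp hvd
      linarith
    have hexp : Real.exp (v (γ t)) ≤ (1 / ‖γ t‖) ^ m := by
      rw [Real.rpow_def_of_pos (by positivity)]
      exact Real.exp_le_exp.mpr (by rw [mul_comm] at hv; exact hv)
    have hded : ‖deriv γ t‖ = r := by
      rw [hγderiv, norm_smul, hne]
      simp [abs_of_pos hr0]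
    rw [hded]
    have hrt : (0:ℝ) < r * (1 - t) := mul_pos hr0 h1t
    have : (1 / ‖γ t‖) ^ m = (r * (1 - t)) ^ (-m) := by
      rw [hnγ, one_div, Real.inv_rpow hrt.le, ← Real.rpow_neg hrt.le]
    rw [this] at hexp
    exact mul_le_mul_of_nonneg_right hexp (le_of_lt hr0)
  -- the bound is integrable on Ioo 0 1
  have hint : IntegrableOn (fun t => (r * (1 - t)) ^ (-m) * r) (Set.Ioo (0:ℝ) 1) := by
    have h1 : IntervalIntegrable (fun x : ℝ => x ^ (-m)) volume 0 1 :=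
      intervalIntegral.intervalIntegrable_rpow' (by linarith)
    have h2 : IntervalIntegrable (fun x : ℝ => (1 - x) ^ (-m)) volume 0 1 := by
      simpa using (h1.comp_sub_left 1).symm
    have h3 : IntervalIntegrable (fun x : ℝ => (r * (1 - x)) ^ (-m) * r) volume 0 1 := by
      have heq : Set.EqOn (fun x => (r ^ (-m) * r) * (1 - x) ^ (-m))
          (fun x => (r * (1 - x)) ^ (-m) * r) (Set.Ioc (0:ℝ) 1) := by
        intro x hx
        simp only
        rw [Real.mul_rpow (le_of_lt hr0) (by linarith [hx.2] : (0:ℝ) ≤ 1 - x)]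
        ring
      rw [intervalIntegrable_iff, Set.uIoc_of_le (by norm_num : (0:ℝ) ≤ 1)] at h2 ⊢
      exact MeasureTheory.IntegrableOn.congr_fun (h2.const_mul (r ^ (-m) * r)) heq measurableSet_Ioc
    rw [intervalIntegrable_iff, Set.uIoc_of_le (by norm_num : (0:ℝ) ≤ 1)] at h3
    exact h3.mono_set Set.Ioo_subset_Ioc_self
  -- finite lintegral, contradiction
  have hfin : ∫⁻ t in Set.Ioo (0:ℝ) 1,
      ENNReal.ofReal (Real.exp (v (γ t)) * ‖deriv γ t‖) < ⊤ := by
    calc ∫⁻ t in Set.Ioo (0:ℝ) 1, ENNReal.ofReal (Real.exp (v (γ t)) * ‖deriv γ t‖)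
        ≤ ∫⁻ t in Set.Ioo (0:ℝ) 1, ENNReal.ofReal ((r * (1 - t)) ^ (-m) * r) := by
          apply setLIntegral_mono' measurableSet_Ioo
          intro t ht
          exact ENNReal.ofReal_le_ofReal (hbound t ht)
      _ < ⊤ := hint.setLIntegral_lt_top
  exact absurd (hcomplete γ hγsmooth.contDiffOn hγmem hγtend) (ne_of_lt hfin)
end

section
/- Let u : ℝ² → ℝ be C² and define the circle average ū(r) = (1/2π)∫₀^{2π} u(r·cosθ, r·sinθ) dθ for r > 0. Then ū is differentiable on (0,∞), for all 0 < r₂ < r₁ one has r₁·ū′(r₁) - r₂·ū′(r₂) = (1/2π)∫_{{z : r₂ < |z| < r₁}} Δu dA, and moreover r·ū′(r) → 0 as r → 0⁺, so that r·ū′(r) = (1/2π)∫_{{z : |z| < r}} Δu dA for every r > 0. -/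
open MeasureTheory Filter

/-- The Euclidean Laplacian of a function on `ℝ²`:
`Δu = ∂²u/∂x² + ∂²u/∂y²`. -/
noncomputable def lap (u : EuclideanSpace ℝ (Fin 2) → ℝ)
    (z : EuclideanSpace ℝ (Fin 2)) : ℝ :=
  fderiv ℝ (fun w => fderiv ℝ u w (EuclideanSpace.single 0 1)) z (EuclideanSpace.single 0 1) +
  fderiv ℝ (fun w => fderiv ℝ u w (EuclideanSpace.single 1 1)) z (EuclideanSpace.single 1 1)

/-- The circle average `ū(r) = (1/2π) ∫₀^{2π} u(r cos θ, r sin θ) dθ`. -/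
noncomputable def circleAverage (u : EuclideanSpace ℝ (Fin 2) → ℝ) (r : ℝ) : ℝ :=
  (1 / (2 * Real.pi)) * ∫ θ in (0:ℝ)..(2 * Real.pi),
    u !₂[r * Real.cos θ, r * Real.sin θ]


open Set in
section
open Set

noncomputable section CircleAvgAux

namespace CircleAvgAux

abbrev EE := EuclideanSpace ℝ (Fin 2)

def E1 : EE := EuclideanSpace.single 0 1
def E2 : EE := EuclideanSpace.single 1 1

def cc (r θ : ℝ) : EE := !₂[r * Real.cos θ, r * Real.sin θ]

def ev (θ : ℝ) : EE := !₂[Real.cos θ, Real.sin θ]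
def ev' (θ : ℝ) : EE := !₂[-Real.sin θ, Real.cos θ]

lemma cc_eq (r θ : ℝ) : cc r θ = (r * Real.cos θ) • E1 + (r * Real.sin θ) • E2 := by
  ext i
  fin_cases i <;>
    simp [cc, E1, E2, EuclideanSpace.single_apply, PiLp.add_apply, PiLp.smul_apply]

lemma ev_eq (θ : ℝ) : ev θ = Real.cos θ • E1 + Real.sin θ • E2 := by
  ext i
  fin_cases i <;>
    simp [ev, E1, E2, EuclideanSpace.single_apply, PiLp.add_apply, PiLp.smul_apply]

lemma ev'_eq (θ : ℝ) : ev' θ = (-Real.sin θ) • E1 + Real.cos θ • E2 := by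
  ext i
  fin_cases i <;>
    simp [ev', E1, E2, EuclideanSpace.single_apply, PiLp.add_apply, PiLp.smul_apply]

lemma norm_cc (r θ : ℝ) : ‖cc r θ‖ = |r| := by
  rw [EuclideanSpace.norm_eq]
  simp only [cc, Fin.sum_univ_two, Matrix.cons_val_zero, Matrix.cons_val_one, Matrix.head_cons,
    Real.norm_eq_abs, sq_abs]
  rw [show (r * Real.cos θ) ^ 2 + (r * Real.sin θ) ^ 2 = r ^ 2 from by
    have := Real.sin_sq_add_cos_sq θ; nlinarith, Real.sqrt_sq_eq_abs]

lemma cc_cont : Continuous fun p : ℝ × ℝ => cc p.1 p.2 := by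
  simp only [cc_eq]
  exact ((continuous_fst.mul (Real.continuous_cos.comp continuous_snd)).smul
    continuous_const).add
    ((continuous_fst.mul (Real.continuous_sin.comp continuous_snd)).smul continuous_const)

lemma ev_funext : ev = fun θ => Real.cos θ • E1 + Real.sin θ • E2 := funext ev_eq
lemma ev'_funext : ev' = fun θ => (-Real.sin θ) • E1 + Real.cos θ • E2 := funext ev'_eq

lemma ev_cont : Continuous ev := by
  rw [ev_funext]
  exact ((Real.continuous_cos).smul continuous_const).add
    ((Real.continuous_sin).smul continuous_const)

lemma ev'_cont : Continuous ev' := by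
  rw [ev'_funext]
  exact ((Real.continuous_sin.neg).smul continuous_const).add
    ((Real.continuous_cos).smul continuous_const)

lemma hasDerivAt_cc_r (θ r : ℝ) : HasDerivAt (fun r => cc r θ) (ev θ) r := by
  simp only [cc_eq, ev_eq]
  exact ((hasDerivAt_mul_const (Real.cos θ)).smul_const E1).add
    ((hasDerivAt_mul_const (Real.sin θ)).smul_const E2)

lemma hasDerivAt_cc_theta (r θ : ℝ) : HasDerivAt (fun θ => cc r θ) (r • ev' θ) θ := by
  simp only [cc_eq]
  have h1 : HasDerivAt (fun θ => r * Real.cos θ) (r * -Real.sin θ) θ :=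
    (Real.hasDerivAt_cos θ).const_mul r
  have h2 : HasDerivAt (fun θ => r * Real.sin θ) (r * Real.cos θ) θ :=
    (Real.hasDerivAt_sin θ).const_mul r
  have := (h1.smul_const E1).add (h2.smul_const E2)
  refine this.congr_deriv ?_
  rw [ev'_eq, smul_add, smul_smul, smul_smul]

lemma hasDerivAt_ev' (θ : ℝ) : HasDerivAt ev' (-ev θ) θ := by
  rw [ev'_funext, ev_eq]
  have h1 : HasDerivAt (fun θ => -Real.sin θ) (-Real.cos θ) θ := (Real.hasDerivAt_sin θ).neg
  have := (h1.smul_const E1).add ((Real.hasDerivAt_cos θ).smul_const E2)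
  refine this.congr_deriv ?_
  rw [neg_add, neg_smul, neg_smul]

lemma cc_add_two_pi (r θ : ℝ) : cc r (θ + 2 * Real.pi) = cc r θ := by
  simp only [cc, Real.cos_add_two_pi, Real.sin_add_two_pi]

lemma cc_two_pi (r : ℝ) : cc r (2 * Real.pi) = cc r 0 := by
  simpa using cc_add_two_pi r 0

lemma ev'_two_pi : ev' (2 * Real.pi) = ev' 0 := by
  simp [ev', Real.cos_two_pi, Real.sin_two_pi]

/-- Parametric continuity of interval integrals. -/
lemma param_continuous {F : ℝ → ℝ → ℝ} (hF : Continuous (Function.uncurry F)) (a b : ℝ) :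
    Continuous fun x => ∫ t in a..b, F x t :=
  intervalIntegral.continuous_parametric_intervalIntegral_of_continuous' hF a b

/-- Differentiation under the interval integral sign, for continuous data. -/
lemma param_hasDerivAt {F F' : ℝ → ℝ → ℝ} {a b : ℝ}
    (hF : Continuous (Function.uncurry F)) (hF' : Continuous (Function.uncurry F'))
    (hd : ∀ x t : ℝ, HasDerivAt (fun y => F y t) (F' x t) x) (x₀ : ℝ) :
    HasDerivAt (fun x => ∫ t in a..b, F x t) (∫ t in a..b, F' x₀ t) x₀ := by
  have hK : IsCompact (Icc (x₀ - 1) (x₀ + 1) ×ˢ uIcc a b) :=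
    isCompact_Icc.prod isCompact_uIcc
  obtain ⟨C, hC⟩ := hK.exists_bound_of_continuousOn hF'.continuousOn
  have h1 : ∀ᶠ x in nhds x₀, AEStronglyMeasurable (F x) (volume.restrict (Set.uIoc a b)) :=
    Eventually.of_forall fun x => (hF.comp (Continuous.prodMk_right x)).aestronglyMeasurable
  have h2 : IntervalIntegrable (F x₀) volume a b :=
    (hF.comp (Continuous.prodMk_right x₀)).intervalIntegrable a b
  have h3 : AEStronglyMeasurable (F' x₀) (volume.restrict (Set.uIoc a b)) :=
    (hF'.comp (Continuous.prodMk_right x₀)).aestronglyMeasurable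
  have h4 : ∀ᵐ t ∂(volume : Measure ℝ), t ∈ Set.uIoc a b →
      ∀ x ∈ Metric.ball x₀ 1, ‖F' x t‖ ≤ C := by
    refine Eventually.of_forall fun t ht x hx => ?_
    have hx2 := abs_lt.1 (by rw [Metric.mem_ball, Real.dist_eq] at hx; exact hx)
    have hx' : x ∈ Icc (x₀ - 1) (x₀ + 1) := ⟨by linarith [hx2.1], by linarith [hx2.2]⟩
    exact hC (x, t) ⟨hx', uIoc_subset_uIcc ht⟩
  have h5 : IntervalIntegrable (fun _ : ℝ => C) volume a b := intervalIntegrable_const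
  have h6 : ∀ᵐ t ∂(volume : Measure ℝ), t ∈ Set.uIoc a b →
      ∀ x ∈ Metric.ball x₀ 1, HasDerivAt (fun y => F y t) (F' x t) x :=
    Eventually.of_forall fun t _ x _ => hd x t
  exact (intervalIntegral.hasDerivAt_integral_of_dominated_loc_of_deriv_le
    (Metric.ball_mem_nhds x₀ one_pos) h1 h2 h3 h4 h5 h6).2

section WithU

variable {u : EE → ℝ}

def F0 (u : EE → ℝ) (r : ℝ) : ℝ := ∫ θ in (0:ℝ)..(2 * Real.pi), u (cc r θ)
def F1 (u : EE → ℝ) (r : ℝ) : ℝ :=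
  ∫ θ in (0:ℝ)..(2 * Real.pi), fderiv ℝ u (cc r θ) (ev θ)
def F2 (u : EE → ℝ) (r : ℝ) : ℝ :=
  ∫ θ in (0:ℝ)..(2 * Real.pi), fderiv ℝ (fderiv ℝ u) (cc r θ) (ev θ) (ev θ)
def Iprime (u : EE → ℝ) (r : ℝ) : ℝ :=
  ∫ θ in (0:ℝ)..(2 * Real.pi), fderiv ℝ (fderiv ℝ u) (cc r θ) (ev' θ) (ev' θ)
def Gf (u : EE → ℝ) (r : ℝ) : ℝ := r * F1 u r

lemma hg1 (hu : ContDiff ℝ 2 u) : ContDiff ℝ 1 (fderiv ℝ u) := hu.fderiv_right (m := 1) (by norm_num)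

lemma gcont (hu : ContDiff ℝ 2 u) : Continuous (fderiv ℝ u) := (hg1 hu).continuous

lemma g2cont (hu : ContDiff ℝ 2 u) : Continuous (fderiv ℝ (fderiv ℝ u)) :=
  ((hg1 hu).fderiv_right (m := 0) (by norm_num)).continuous

lemma hud (hu : ContDiff ℝ 2 u) (z : EE) : HasFDerivAt u (fderiv ℝ u z) z :=
  (hu.differentiable (by norm_num) z).hasFDerivAt

lemma hgd (hu : ContDiff ℝ 2 u) (z : EE) : HasFDerivAt (fderiv ℝ u) (fderiv ℝ (fderiv ℝ u) z) z :=
  ((hg1 hu).differentiable one_ne_zero z).hasFDerivAt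

lemma contF0i (hu : ContDiff ℝ 2 u) : Continuous (Function.uncurry fun r θ : ℝ => u (cc r θ)) :=
  hu.continuous.comp cc_cont

lemma contF1i (hu : ContDiff ℝ 2 u) :
    Continuous (Function.uncurry fun r θ : ℝ => fderiv ℝ u (cc r θ) (ev θ)) :=
  ((gcont hu).comp cc_cont).clm_apply (ev_cont.comp continuous_snd)

lemma contF2i (hu : ContDiff ℝ 2 u) : Continuous
    (Function.uncurry fun r θ : ℝ => fderiv ℝ (fderiv ℝ u) (cc r θ) (ev θ) (ev θ)) :=
  (((g2cont hu).comp cc_cont).clm_apply (ev_cont.comp continuous_snd)).clm_apply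
    (ev_cont.comp continuous_snd)

lemma contIpi (hu : ContDiff ℝ 2 u) : Continuous
    (Function.uncurry fun r θ : ℝ => fderiv ℝ (fderiv ℝ u) (cc r θ) (ev' θ) (ev' θ)) :=
  (((g2cont hu).comp cc_cont).clm_apply (ev'_cont.comp continuous_snd)).clm_apply
    (ev'_cont.comp continuous_snd)

lemma dF0 (hu : ContDiff ℝ 2 u) (r θ : ℝ) :
    HasDerivAt (fun r => u (cc r θ)) (fderiv ℝ u (cc r θ) (ev θ)) r :=
  (hud hu (cc r θ)).comp_hasDerivAt r (hasDerivAt_cc_r θ r)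

lemma dF1 (hu : ContDiff ℝ 2 u) (r θ : ℝ) : HasDerivAt (fun r => fderiv ℝ u (cc r θ) (ev θ))
    (fderiv ℝ (fderiv ℝ u) (cc r θ) (ev θ) (ev θ)) r := by
  have hA : HasDerivAt (fun r => fderiv ℝ u (cc r θ))
      (fderiv ℝ (fderiv ℝ u) (cc r θ) (ev θ)) r :=
    (hgd hu (cc r θ)).comp_hasDerivAt r (hasDerivAt_cc_r θ r)
  have := hA.clm_apply (hasDerivAt_const r (ev θ))
  simpa using this

lemma hF0' (hu : ContDiff ℝ 2 u) (r : ℝ) : HasDerivAt (F0 u) (F1 u r) r :=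
  param_hasDerivAt (contF0i hu) (contF1i hu) (dF0 hu) r

lemma hF1' (hu : ContDiff ℝ 2 u) (r : ℝ) : HasDerivAt (F1 u) (F2 u r) r :=
  param_hasDerivAt (contF1i hu) (contF2i hu) (dF1 hu) r

lemma contF1 (hu : ContDiff ℝ 2 u) : Continuous (F1 u) := param_continuous (contF1i hu) _ _
lemma contF2 (hu : ContDiff ℝ 2 u) : Continuous (F2 u) := param_continuous (contF2i hu) _ _
lemma contIp (hu : ContDiff ℝ 2 u) : Continuous (Iprime u) := param_continuous (contIpi hu) _ _

/-- The key integration-by-parts-in-θ identity. -/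
lemma F1_eq (hu : ContDiff ℝ 2 u) (ρ : ℝ) : F1 u ρ = ρ * Iprime u ρ := by
  have hh : ∀ θ : ℝ, HasDerivAt (fun θ => fderiv ℝ u (cc ρ θ) (ev' θ))
      (ρ * fderiv ℝ (fderiv ℝ u) (cc ρ θ) (ev' θ) (ev' θ)
        - fderiv ℝ u (cc ρ θ) (ev θ)) θ := by
    intro θ
    have hA : HasDerivAt (fun θ => fderiv ℝ u (cc ρ θ))
        (fderiv ℝ (fderiv ℝ u) (cc ρ θ) (ρ • ev' θ)) θ :=
      (hgd hu (cc ρ θ)).comp_hasDerivAt θ (hasDerivAt_cc_theta ρ θ)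
    have := hA.clm_apply (hasDerivAt_ev' θ)
    refine this.congr_deriv ?_
    rw [ContinuousLinearMap.map_smul, ContinuousLinearMap.map_neg, ContinuousLinearMap.smul_apply]
    simp [smul_eq_mul, sub_eq_add_neg]
  have hcontD : Continuous fun θ =>
      ρ * fderiv ℝ (fderiv ℝ u) (cc ρ θ) (ev' θ) (ev' θ)
        - fderiv ℝ u (cc ρ θ) (ev θ) := by
    have c1 : Continuous fun θ : ℝ => cc ρ θ :=
      cc_cont.comp (continuous_const.prodMk continuous_id)
    exact (continuous_const.mul
      ((((g2cont hu).comp c1).clm_apply ev'_cont).clm_apply ev'_cont)).sub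
      (((gcont hu).comp c1).clm_apply ev_cont)
  have hFTC := intervalIntegral.integral_eq_sub_of_hasDerivAt
    (f := fun θ => fderiv ℝ u (cc ρ θ) (ev' θ)) (a := (0:ℝ)) (b := 2 * Real.pi)
    (fun θ _ => hh θ) (hcontD.intervalIntegrable _ _)
  simp only [cc_two_pi, ev'_two_pi, sub_self] at hFTC
  have c1 : Continuous fun θ : ℝ => cc ρ θ :=
    cc_cont.comp (continuous_const.prodMk continuous_id)
  have hi1 : IntervalIntegrable
      (fun θ => ρ * fderiv ℝ (fderiv ℝ u) (cc ρ θ) (ev' θ) (ev' θ))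
      volume 0 (2 * Real.pi) :=
    ((continuous_const.mul
      ((((g2cont hu).comp c1).clm_apply ev'_cont).clm_apply ev'_cont))).intervalIntegrable _ _
  have hi2 : IntervalIntegrable (fun θ => fderiv ℝ u (cc ρ θ) (ev θ))
      volume 0 (2 * Real.pi) :=
    (((gcont hu).comp c1).clm_apply ev_cont).intervalIntegrable _ _
  rw [intervalIntegral.integral_sub hi1 hi2, intervalIntegral.integral_const_mul] at hFTC
  have : ρ * Iprime u ρ - F1 u ρ = 0 := hFTC
  linarith

lemma lap_eq (hu : ContDiff ℝ 2 u) (z : EE) :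
    lap u z = fderiv ℝ (fderiv ℝ u) z E1 E1 + fderiv ℝ (fderiv ℝ u) z E2 E2 := by
  have hdg : DifferentiableAt ℝ (fderiv ℝ u) z := (hg1 hu).differentiable one_ne_zero z
  have h : ∀ v : EE, fderiv ℝ (fun w => fderiv ℝ u w v) z
      = (fderiv ℝ (fderiv ℝ u) z).flip v := by
    intro v
    have := fderiv_clm_apply (c := fderiv ℝ u) (u := fun _ => v) hdg (differentiableAt_const v)
    simpa using this
  rw [lap, h, h]
  rfl

lemma rotation (z : EE) (θ : ℝ) :
    fderiv ℝ (fderiv ℝ u) z (ev θ) (ev θ) + fderiv ℝ (fderiv ℝ u) z (ev' θ) (ev' θ)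
      = fderiv ℝ (fderiv ℝ u) z E1 E1 + fderiv ℝ (fderiv ℝ u) z E2 E2 := by
  rw [ev_eq, ev'_eq]
  simp only [map_add, _root_.map_smul, ContinuousLinearMap.add_apply,
    ContinuousLinearMap.smul_apply, smul_eq_mul]
  have hs := Real.sin_sq_add_cos_sq θ
  linear_combination (fderiv ℝ (fderiv ℝ u) z E1 E1 + fderiv ℝ (fderiv ℝ u) z E2 E2) * hs

def DD (u : EE → ℝ) (ρ : ℝ) : ℝ := ρ * ∫ θ in (0:ℝ)..(2 * Real.pi), lap u (cc ρ θ)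

lemma lap_cont (hu : ContDiff ℝ 2 u) : Continuous (lap u) := by
  have : lap u = fun z => fderiv ℝ (fderiv ℝ u) z E1 E1 + fderiv ℝ (fderiv ℝ u) z E2 E2 :=
    funext (lap_eq hu)
  rw [this]
  exact (((g2cont hu).clm_apply continuous_const).clm_apply continuous_const).add
    (((g2cont hu).clm_apply continuous_const).clm_apply continuous_const)

lemma DD_cont (hu : ContDiff ℝ 2 u) : Continuous (DD u) := by
  have hc : Continuous (Function.uncurry fun r θ : ℝ => lap u (cc r θ)) :=
    (lap_cont hu).comp cc_cont
  exact continuous_id.mul (param_continuous hc _ _)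

lemma lapInt_eq (hu : ContDiff ℝ 2 u) (ρ : ℝ) :
    (∫ θ in (0:ℝ)..(2 * Real.pi), lap u (cc ρ θ)) = F2 u ρ + Iprime u ρ := by
  have c1 : Continuous fun θ : ℝ => cc ρ θ :=
    cc_cont.comp (continuous_const.prodMk continuous_id)
  have h1 : IntervalIntegrable
      (fun θ => fderiv ℝ (fderiv ℝ u) (cc ρ θ) (ev θ) (ev θ)) volume 0 (2 * Real.pi) :=
    ((((g2cont hu).comp c1).clm_apply ev_cont).clm_apply ev_cont).intervalIntegrable _ _
  have h2 : IntervalIntegrable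
      (fun θ => fderiv ℝ (fderiv ℝ u) (cc ρ θ) (ev' θ) (ev' θ)) volume 0 (2 * Real.pi) :=
    ((((g2cont hu).comp c1).clm_apply ev'_cont).clm_apply ev'_cont).intervalIntegrable _ _
  calc (∫ θ in (0:ℝ)..(2 * Real.pi), lap u (cc ρ θ))
      = ∫ θ in (0:ℝ)..(2 * Real.pi),
          (fderiv ℝ (fderiv ℝ u) (cc ρ θ) (ev θ) (ev θ)
            + fderiv ℝ (fderiv ℝ u) (cc ρ θ) (ev' θ) (ev' θ)) := by
        refine intervalIntegral.integral_congr fun θ _ => ?_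
        rw [lap_eq hu, ← rotation (cc ρ θ) θ]
    _ = F2 u ρ + Iprime u ρ := intervalIntegral.integral_add h1 h2

lemma GfDeriv (hu : ContDiff ℝ 2 u) (ρ : ℝ) : HasDerivAt (Gf u) (DD u ρ) ρ := by
  have h := (hasDerivAt_id ρ).mul (hF1' hu ρ)
  have hG : Gf u = fun ρ => ρ * F1 u ρ := rfl
  rw [hG]
  refine h.congr_deriv ?_
  rw [DD, lapInt_eq hu ρ, F1_eq hu ρ]
  simp only [id_eq]
  ring

lemma inner_eval (hu : ContDiff ℝ 2 u) (ρ : ℝ) :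
    (∫ θ in Ioo (-Real.pi) Real.pi, ρ * lap u (cc ρ θ)) = DD u ρ := by
  have hper : Function.Periodic (fun θ => ρ * lap u (cc ρ θ)) (2 * Real.pi) := by
    intro θ
    simp only
    rw [cc_add_two_pi ρ θ]
  have hshift := hper.intervalIntegral_add_eq (-Real.pi) 0
  have hpi : 0 < Real.pi := Real.pi_pos
  rw [← integral_Ioc_eq_integral_Ioo,
    ← intervalIntegral.integral_of_le (by linarith : -Real.pi ≤ Real.pi)]
  have h1 : -Real.pi + 2 * Real.pi = Real.pi := by ring
  rw [h1] at hshift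
  rw [hshift, zero_add, DD, ← intervalIntegral.integral_const_mul]

lemma annulus_integral (hu : ContDiff ℝ 2 u) {r₂ r₁ : ℝ} (h0 : 0 ≤ r₂) (h12 : r₂ < r₁) :
    ∫ z in {z : EE | r₂ < ‖z‖ ∧ ‖z‖ < r₁}, lap u z = Gf u r₁ - Gf u r₂ := by
  have hpi : 0 < Real.pi := Real.pi_pos
  set ψ : ℝ × ℝ ≃ᵐ EE :=
    ((MeasurableEquiv.toLp 2 (Fin 2 → ℝ)).symm.trans MeasurableEquiv.finTwoArrow).symm with hψdef
  have hψ : MeasurePreserving ψ volume volume :=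
    MeasurePreserving.symm _
      ((EuclideanSpace.volume_preserving_symm_measurableEquiv_toLp (Fin 2)).trans
        (volume_preserving_finTwoArrow ℝ))
  have hψc : ∀ ρ θ : ℝ, ψ (ρ * Real.cos θ, ρ * Real.sin θ) = cc ρ θ := by
    intro ρ θ
    ext i
    fin_cases i <;> rfl
  set S : Set EE := {z | r₂ < ‖z‖ ∧ ‖z‖ < r₁} with hS
  have hSopen : IsOpen S := by
    rw [hS, setOf_and]
    exact (isOpen_lt continuous_const continuous_norm).inter
      (isOpen_lt continuous_norm continuous_const)
  set Q : Set (ℝ × ℝ) := Ioo r₂ r₁ ×ˢ Ioo (-Real.pi) Real.pi with hQ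
  have hQsub : Q ⊆ polarCoord.target := by
    rintro ⟨a, b⟩ ⟨ha, hb⟩
    exact ⟨lt_of_le_of_lt h0 ha.1, hb⟩
  have hcont : Continuous fun p : ℝ × ℝ => p.1 * lap u (cc p.1 p.2) :=
    continuous_fst.mul ((lap_cont hu).comp cc_cont)
  have step1 : ∫ z in S, lap u z = ∫ p in ψ ⁻¹' S, lap u (ψ p) :=
    (hψ.setIntegral_preimage_emb ψ.measurableEmbedding _ _).symm
  have step2 : ∫ p in ψ ⁻¹' S, lap u (ψ p)
      = ∫ p : ℝ × ℝ, Set.indicator (ψ ⁻¹' S) (fun p => lap u (ψ p)) p :=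
    (integral_indicator (hSopen.measurableSet.preimage ψ.measurable)).symm
  have step3 : ∫ p : ℝ × ℝ, Set.indicator (ψ ⁻¹' S) (fun p => lap u (ψ p)) p
      = ∫ p in polarCoord.target,
          p.1 • Set.indicator (ψ ⁻¹' S) (fun p => lap u (ψ p)) (polarCoord.symm p) :=
    (integral_comp_polarCoord_symm _).symm
  have hQmeas : MeasurableSet Q := measurableSet_Ioo.prod measurableSet_Ioo
  have hinter : polarCoord.target ∩ Q = Q := inter_eq_self_of_subset_right hQsub
  have step4a : ∫ p in polarCoord.target,
        p.1 • Set.indicator (ψ ⁻¹' S) (fun p => lap u (ψ p)) (polarCoord.symm p)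
      = ∫ p in polarCoord.target,
          Set.indicator Q (fun p : ℝ × ℝ => p.1 * lap u (cc p.1 p.2)) p := by
    refine setIntegral_congr_fun polarCoord.open_target.measurableSet fun p hp => ?_
    obtain ⟨hp1, hp2⟩ := hp
    have hsymm : polarCoord.symm p = (p.1 * Real.cos p.2, p.1 * Real.sin p.2) := rfl
    have hmem : polarCoord.symm p ∈ ψ ⁻¹' S ↔ (r₂ < p.1 ∧ p.1 < r₁) := by
      rw [hsymm, Set.mem_preimage, hψc]
      simp only [hS, Set.mem_setOf_eq, norm_cc, abs_of_pos (mem_Ioi.1 hp1)]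
    by_cases hcase : r₂ < p.1 ∧ p.1 < r₁
    · rw [Set.indicator_of_mem (hmem.2 hcase), Set.indicator_of_mem
        (by exact ⟨hcase, hp2⟩ : p ∈ Q)]
      rw [hsymm, hψc]
      exact smul_eq_mul ..
    · rw [Set.indicator_of_notMem (fun h => hcase (hmem.1 h)),
        Set.indicator_of_notMem (fun h => hcase ⟨(mem_prod.1 h).1.1, (mem_prod.1 h).1.2⟩),
        smul_zero]
  have step4 : ∫ p in polarCoord.target,
        p.1 • Set.indicator (ψ ⁻¹' S) (fun p => lap u (ψ p)) (polarCoord.symm p)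
      = ∫ p in Q, p.1 * lap u (cc p.1 p.2) := by
    rw [step4a, setIntegral_indicator hQmeas, hinter]
  have hint : IntegrableOn (fun p : ℝ × ℝ => p.1 * lap u (cc p.1 p.2)) Q volume := by
    refine (hcont.continuousOn.integrableOn_compact
      (isCompact_Icc.prod isCompact_Icc :
        IsCompact (Icc r₂ r₁ ×ˢ Icc (-Real.pi) Real.pi))).mono_set ?_
    exact Set.prod_mono Ioo_subset_Icc_self Ioo_subset_Icc_self
  have step5 : ∫ p in Q, p.1 * lap u (cc p.1 p.2)
      = ∫ ρ in Ioo r₂ r₁, ∫ θ in Ioo (-Real.pi) Real.pi, ρ * lap u (cc ρ θ) := by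
    rw [hQ, Measure.volume_eq_prod] at hint ⊢
    exact setIntegral_prod _ hint
  have step6 : ∫ ρ in Ioo r₂ r₁, (∫ θ in Ioo (-Real.pi) Real.pi, ρ * lap u (cc ρ θ))
      = ∫ ρ in Ioo r₂ r₁, DD u ρ := by
    refine setIntegral_congr_fun measurableSet_Ioo fun ρ _ => ?_
    exact inner_eval hu ρ
  have step7 : ∫ ρ in Ioo r₂ r₁, DD u ρ = Gf u r₁ - Gf u r₂ := by
    rw [← integral_Ioc_eq_integral_Ioo, ← intervalIntegral.integral_of_le h12.le]
    exact intervalIntegral.integral_eq_sub_of_hasDerivAt (fun ρ _ => GfDeriv hu ρ)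
      ((DD_cont hu).intervalIntegrable _ _)
  rw [step1, step2, step3, step4, step5, step6, step7]

end WithU

end CircleAvgAux

end CircleAvgAux

end

open CircleAvgAux in
/-- For a `C²` function `u` on `ℝ²`, the circle average `ū` is differentiable on
`(0,∞)`, satisfies `r₁ ū′(r₁) - r₂ ū′(r₂) = (1/2π) ∫_{r₂<|z|<r₁} Δu dA` for
`0 < r₂ < r₁`, `r ū′(r) → 0` as `r → 0⁺`, and hence
`r ū′(r) = (1/2π) ∫_{|z|<r} Δu dA` for every `r > 0`. -/
theorem circle_average_derivative_identity
    (u : EuclideanSpace ℝ (Fin 2) → ℝ) (hu : ContDiff ℝ 2 u) :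
    (∀ r : ℝ, 0 < r → DifferentiableAt ℝ (circleAverage u) r) ∧
    (∀ r₁ r₂ : ℝ, 0 < r₂ → r₂ < r₁ →
      r₁ * deriv (circleAverage u) r₁ - r₂ * deriv (circleAverage u) r₂
        = (1 / (2 * Real.pi)) *
            ∫ z in {z : EuclideanSpace ℝ (Fin 2) | r₂ < ‖z‖ ∧ ‖z‖ < r₁}, lap u z) ∧
    Tendsto (fun r => r * deriv (circleAverage u) r) (nhdsWithin 0 (Set.Ioi 0)) (nhds 0) ∧
    (∀ r : ℝ, 0 < r →
      r * deriv (circleAverage u) r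
        = (1 / (2 * Real.pi)) * ∫ z in {z : EuclideanSpace ℝ (Fin 2) | ‖z‖ < r}, lap u z) := by
  have hCA : ∀ r : ℝ, HasDerivAt (circleAverage u) (1 / (2 * Real.pi) * F1 u r) r := by
    intro r
    have h := (hF0' hu r).const_mul (1 / (2 * Real.pi))
    have he : circleAverage u = fun r => 1 / (2 * Real.pi) * F0 u r := rfl
    rw [he]
    exact h
  have hderiv : ∀ r : ℝ, deriv (circleAverage u) r = 1 / (2 * Real.pi) * F1 u r :=
    fun r => (hCA r).deriv
  have hrd : ∀ r : ℝ, r * deriv (circleAverage u) r = 1 / (2 * Real.pi) * Gf u r := by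
    intro r
    rw [hderiv r]
    simp only [Gf]
    ring
  refine ⟨fun r _ => (hCA r).differentiableAt, ?_, ?_, ?_⟩
  · intro r₁ r₂ h2 h12
    rw [hrd r₁, hrd r₂, annulus_integral hu h2.le h12]
    ring
  · have hfun : (fun r : ℝ => r * deriv (circleAverage u) r)
        = fun r => 1 / (2 * Real.pi) * Gf u r := funext hrd
    rw [hfun]
    have hcG : Continuous (Gf u) := continuous_id.mul (contF1 hu)
    have h0 : (1 : ℝ) / (2 * Real.pi) * Gf u 0 = 0 := by
      simp [Gf]
    have hc2 : Continuous fun r : ℝ => 1 / (2 * Real.pi) * Gf u r :=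
      continuous_const.mul hcG
    have ht := (hc2.tendsto 0).mono_left (nhdsWithin_le_nhds (s := Set.Ioi (0:ℝ)))
    rw [h0] at ht
    exact ht
  · intro r hr
    have hset : (∫ z in {z : EuclideanSpace ℝ (Fin 2) | ‖z‖ < r}, lap u z)
        = ∫ z in {z : EuclideanSpace ℝ (Fin 2) | 0 < ‖z‖ ∧ ‖z‖ < r}, lap u z := by
      refine setIntegral_congr_set ?_
      rw [MeasureTheory.ae_eq_set]
      constructor
      · refine measure_mono_null (fun z hz => ?_) (measure_singleton (0 : EE))
        simp only [Set.mem_diff, Set.mem_setOf_eq, not_and, not_lt] at hz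
        have h1 : ‖z‖ ≤ 0 := by
          by_contra hc
          push_neg at hc
          exact absurd (hz.2 hc) (not_le.2 hz.1)
        simpa [Set.mem_singleton_iff, norm_le_zero_iff] using h1
      · refine measure_mono_null (fun z hz => ?_) (measure_empty (μ := volume))
        simp only [Set.mem_diff, Set.mem_setOf_eq, not_lt] at hz
        exact absurd hz.2 (not_le.2 hz.1.2)
    rw [hrd r, hset, annulus_integral hu le_rfl hr]
    have h0 : Gf u 0 = 0 := by simp [Gf]
    rw [h0, sub_zero]
end

section
/- Let u : ℝ² → ℝ be C² with Δu ≤ 0 everywhere, and suppose u(z)/log|z| → -m as |z| → ∞ for some real number m (i.e. u(z) = -m·log|z| + o(log|z|)). Then the Lebesgue integral ∫_{ℝ²} (-Δu) dA equals 2πm. In particular, if Δu is not identically zero, then m > 0. -/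
open MeasureTheory Filter Set
open scoped ENNReal

noncomputable section TCaux

abbrev E2 := EuclideanSpace ℝ (Fin 2)

def ee0 : E2 := EuclideanSpace.single 0 1
def ee1 : E2 := EuclideanSpace.single 1 1

def cc (θ : ℝ) : E2 := Real.cos θ • ee0 + Real.sin θ • ee1
def cc' (θ : ℝ) : E2 := (-Real.sin θ) • ee0 + Real.cos θ • ee1
def sg (r θ : ℝ) : E2 := r • cc θ

lemma norm_cc (θ : ℝ) : ‖cc θ‖ = 1 := by
  rw [EuclideanSpace.norm_eq]
  have h0 : (cc θ) 0 = Real.cos θ := by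
    simp [cc, ee0, ee1, EuclideanSpace.single_apply]
  have h1 : (cc θ) 1 = Real.sin θ := by
    simp [cc, ee0, ee1, EuclideanSpace.single_apply]
  rw [Fin.sum_univ_two, h0, h1]
  simp only [Real.norm_eq_abs, sq_abs]
  rw [Real.cos_sq_add_sin_sq]
  exact Real.sqrt_one

lemma norm_sg (r θ : ℝ) : ‖sg r θ‖ = |r| := by
  rw [sg, norm_smul, norm_cc, Real.norm_eq_abs, mul_one]

lemma hasDerivAt_cc (θ : ℝ) : HasDerivAt cc (cc' θ) θ := by
  unfold cc cc'
  exact ((Real.hasDerivAt_cos θ).smul_const ee0).add ((Real.hasDerivAt_sin θ).smul_const ee1)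

lemma hasDerivAt_cc' (θ : ℝ) : HasDerivAt cc' (-cc θ) θ := by
  have h : HasDerivAt cc' ((-Real.cos θ) • ee0 + (-Real.sin θ) • ee1) θ := by
    unfold cc'
    exact (((Real.hasDerivAt_sin θ).neg).smul_const ee0).add ((Real.hasDerivAt_cos θ).smul_const ee1)
  convert h using 1
  unfold cc
  module

lemma hasDerivAt_sg_r (r θ : ℝ) : HasDerivAt (fun s => sg s θ) (cc θ) r := by
  have := (hasDerivAt_id r).smul_const (cc θ)
  simpa [sg] using this

lemma hasDerivAt_sg_theta (r θ : ℝ) : HasDerivAt (sg r) (r • cc' θ) θ :=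
  (hasDerivAt_cc θ).const_smul r

lemma continuous_sg : Continuous (fun p : ℝ × ℝ => sg p.1 p.2) := by
  unfold sg cc
  fun_prop



noncomputable section TCcalc
open Real

variable (u : E2 → ℝ)

def D2 (z : E2) : E2 →L[ℝ] E2 →L[ℝ] ℝ := fderiv ℝ (fderiv ℝ u) z

variable {u}
variable (hu : ContDiff ℝ 2 u)
include hu

lemma hDu (z : E2) : HasFDerivAt u (fderiv ℝ u z) z :=
  (hu.differentiable (by norm_num)).differentiableAt.hasFDerivAt

lemma hD2 (z : E2) : HasFDerivAt (fderiv ℝ u) (D2 u z) z := by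
  have h1 : ContDiff ℝ 1 (fderiv ℝ u) := hu.fderiv_right (by norm_num)
  exact (h1.differentiable one_ne_zero).differentiableAt.hasFDerivAt

lemma contDu : Continuous (fderiv ℝ u) := hu.continuous_fderiv (by norm_num)

lemma contD2 : Continuous (D2 u) := by
  have h1 : ContDiff ℝ 1 (fderiv ℝ u) := hu.fderiv_right (by norm_num)
  exact h1.continuous_fderiv (by norm_num)

lemma lap_eq (z : E2) : lap u z = D2 u z ee0 ee0 + D2 u z ee1 ee1 := by
  have key : ∀ e : E2, fderiv ℝ (fun w => fderiv ℝ u w e) z e = D2 u z e e := by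
    intro e
    have h : HasFDerivAt (fun w => fderiv ℝ u w e)
        (((fderiv ℝ u z).comp (0 : E2 →L[ℝ] E2)) + (D2 u z).flip e) z :=
      (hD2 hu z).clm_apply (hasFDerivAt_const e z)
    rw [h.fderiv]
    simp
  rw [lap, key, key]; rfl

lemma cont_lap : Continuous (lap u) := by
  have : Continuous fun z => D2 u z ee0 ee0 + D2 u z ee1 ee1 := by
    apply Continuous.add
    · exact (Continuous.clm_apply (contD2 hu) continuous_const).clm_apply continuous_const
    · exact (Continuous.clm_apply (contD2 hu) continuous_const).clm_apply continuous_const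
  exact this.congr fun z => (lap_eq hu z).symm

/-- rotation invariance of the trace of the second derivative -/
lemma trace_rot (z : E2) (θ : ℝ) :
    D2 u z (cc θ) (cc θ) + D2 u z (cc' θ) (cc' θ) = lap u z := by
  rw [lap_eq hu]
  unfold cc cc'
  simp only [map_add, _root_.map_smul, ContinuousLinearMap.add_apply, ContinuousLinearMap.coe_smul',
    Pi.smul_apply, smul_eq_mul]
  linear_combination (Real.sin_sq_add_cos_sq θ) * (D2 u z ee0 ee0 + D2 u z ee1 ee1)

/-- derivative in r of `h(r,θ) = r ∂u/∂r` -/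
lemma hasDerivAt_h (r θ : ℝ) :
    HasDerivAt (fun s => s * (fderiv ℝ u (sg s θ) (cc θ)))
      (fderiv ℝ u (sg r θ) (cc θ) + r * (D2 u (sg r θ) (cc θ) (cc θ))) r := by
  have h1 : HasDerivAt (fun s => fderiv ℝ u (sg s θ))
      ((D2 u (sg r θ)) (cc θ)) r :=
    (hD2 hu (sg r θ)).comp_hasDerivAt r (hasDerivAt_sg_r r θ)
  have h2 : HasDerivAt (fun s => fderiv ℝ u (sg s θ) (cc θ))
      ((D2 u (sg r θ)) (cc θ) (cc θ)) r := by
    simpa using h1.clm_apply (hasDerivAt_const r (cc θ))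
  have := (hasDerivAt_id r).mul h2
  convert this using 1
  · rfl
  · rfl
  · rfl
  simp only [id]
  ring

/-- derivative in θ of `k(r,θ) = (1/r) ∂u/∂θ = Du(σ)(c'(θ))` -/
lemma hasDerivAt_k (r θ : ℝ) :
    HasDerivAt (fun φ => fderiv ℝ u (sg r φ) (cc' φ))
      (r * (D2 u (sg r θ) (cc' θ) (cc' θ)) - fderiv ℝ u (sg r θ) (cc θ)) θ := by
  have h1 : HasDerivAt (fun φ => fderiv ℝ u (sg r φ))
      ((D2 u (sg r θ)) (r • cc' θ)) θ :=
    (hD2 hu (sg r θ)).comp_hasDerivAt θ (hasDerivAt_sg_theta r θ)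
  have h2 := h1.clm_apply (hasDerivAt_cc' θ)
  convert h2 using 1
  · rfl
  · rfl
  simp [_root_.map_smul]
  ring

/-- the polar form of the Laplacian, integrated form -/
lemma polar_lap (r θ : ℝ) :
    (fderiv ℝ u (sg r θ) (cc θ) + r * (D2 u (sg r θ) (cc θ) (cc θ)))
      + (r * (D2 u (sg r θ) (cc' θ) (cc' θ)) - fderiv ℝ u (sg r θ) (cc θ))
    = r * lap u (sg r θ) := by
  have := trace_rot hu (sg r θ) θ
  linear_combination r * this

end TCcalc

noncomputable def psi (p : ℝ × ℝ) : E2 := p.1 • ee0 + p.2 • ee1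

lemma psi_eq : psi = fun p : ℝ × ℝ =>
    (MeasurableEquiv.toLp 2 (Fin 2 → ℝ)) ((MeasurableEquiv.finTwoArrow).symm p) := by
  funext p
  apply PiLp.ext
  intro i
  fin_cases i <;>
    simp [psi, ee0, ee1, MeasurableEquiv.coe_toLp, MeasurableEquiv.finTwoArrow,
      EuclideanSpace.single_apply]

lemma psi_mp : MeasurePreserving psi volume volume := by
  rw [psi_eq]
  exact ((EuclideanSpace.volume_preserving_symm_measurableEquiv_toLp (Fin 2)).symm _).comp
    ((volume_preserving_finTwoArrow ℝ).symm _)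

lemma psi_me : MeasurableEmbedding psi := by
  rw [psi_eq]
  exact (MeasurableEquiv.toLp 2 (Fin 2 → ℝ)).measurableEmbedding.comp
    (MeasurableEquiv.finTwoArrow).symm.measurableEmbedding

lemma integral_psi (g : E2 → ℝ) : ∫ p : ℝ × ℝ, g (psi p) = ∫ z : E2, g z :=
  psi_mp.integral_comp psi_me g

lemma psi_polar (p : ℝ × ℝ) : psi (polarCoord.symm p) = sg p.1 p.2 := by
  rw [polarCoord_symm_apply]
  unfold psi sg cc
  simp [smul_smul]


lemma polar_ball (g : E2 → ℝ) (hg : Continuous g) {R : ℝ} (hR : 0 ≤ R) :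
    ∫ z in Metric.ball (0:E2) R, g z
      = ∫ r in (0:ℝ)..R, ∫ θ in (-Real.pi)..Real.pi, r * g (sg r θ) := by
  have hπ : (-Real.pi) ≤ Real.pi := by linarith [Real.pi_pos]
  have hcont : Continuous fun p : ℝ × ℝ => p.1 * g (sg p.1 p.2) := by
    apply continuous_fst.mul
    apply hg.comp
    unfold sg cc
    fun_prop
  have hint : IntegrableOn (fun p : ℝ × ℝ => p.1 * g (sg p.1 p.2))
      (Ioo (0:ℝ) R ×ˢ Ioo (-Real.pi) Real.pi) volume := by
    exact (hcont.continuousOn.integrableOn_compact (isCompact_Icc.prod isCompact_Icc)).mono_set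
      (Set.prod_mono Ioo_subset_Icc_self Ioo_subset_Icc_self)
  have h1 : ∫ z in Metric.ball (0:E2) R, g z
      = ∫ z : E2, (Metric.ball (0:E2) R).indicator g z := by
    rw [integral_indicator measurableSet_ball]
  rw [h1, ← integral_psi, ← integral_comp_polarCoord_symm]
  have h2 : ∀ p ∈ polarCoord.target,
      p.1 • (Metric.ball (0:E2) R).indicator g (psi (polarCoord.symm p))
        = (Set.Iio R ×ˢ (Set.univ : Set ℝ)).indicator
            (fun q : ℝ × ℝ => q.1 * g (sg q.1 q.2)) p := by
    rintro ⟨r, θ⟩ hp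
    rw [polarCoord_target] at hp
    have hr : 0 < r := hp.1
    rw [psi_polar]
    by_cases hlt : r < R
    · have hmem : sg r θ ∈ Metric.ball (0:E2) R := by
        rw [Metric.mem_ball, dist_zero_right, norm_sg, abs_of_pos hr]
        exact hlt
      rw [Set.indicator_of_mem hmem, Set.indicator_of_mem (by simp [hlt])]
      simp [smul_eq_mul]
    · have hmem : sg r θ ∉ Metric.ball (0:E2) R := by
        rw [Metric.mem_ball, dist_zero_right, norm_sg, abs_of_pos hr]
        exact hlt
      rw [Set.indicator_of_notMem hmem, Set.indicator_of_notMem (by simp [hlt])]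
      simp
  have htgt : MeasurableSet polarCoord.target := by
    rw [polarCoord_target]; exact measurableSet_Ioi.prod measurableSet_Ioo
  rw [setIntegral_congr_fun htgt h2,
    setIntegral_indicator (measurableSet_Iio.prod MeasurableSet.univ)]
  have h3 : polarCoord.target ∩ (Set.Iio R ×ˢ (Set.univ : Set ℝ))
      = Ioo (0:ℝ) R ×ˢ Ioo (-Real.pi) Real.pi := by
    rw [polarCoord_target, Set.prod_inter_prod]
    congr 1
    ext x; simp [Set.mem_Ioo, and_comm]
  rw [h3]
  rw [Measure.volume_eq_prod] at hint ⊢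
  rw [setIntegral_prod _ hint]
  rw [intervalIntegral.integral_of_le hR, integral_Ioc_eq_integral_Ioo]
  apply setIntegral_congr_fun measurableSet_Ioo
  intro r hr
  dsimp only
  rw [intervalIntegral.integral_of_le hπ, integral_Ioc_eq_integral_Ioo]


noncomputable section TCmain
open Real intervalIntegral

lemma continuous_cc : Continuous cc := by unfold cc; fun_prop
lemma continuous_cc' : Continuous cc' := by unfold cc'; fun_prop

variable {u : E2 → ℝ} (hu : ContDiff ℝ 2 u)
include hu

lemma contDuApp : Continuous fun p : ℝ × ℝ => fderiv ℝ u (sg p.1 p.2) (cc p.2) :=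
  (( contDu hu).comp (continuous_sg)).clm_apply (continuous_cc.comp continuous_snd)

lemma contP : Continuous fun p : ℝ × ℝ =>
    fderiv ℝ u (sg p.1 p.2) (cc p.2) + p.1 * (D2 u (sg p.1 p.2) (cc p.2) (cc p.2)) := by
  apply (contDuApp hu).add
  exact continuous_fst.mul ((((contD2 hu).comp continuous_sg).clm_apply
    (continuous_cc.comp continuous_snd)).clm_apply (continuous_cc.comp continuous_snd))

lemma contQ : Continuous fun p : ℝ × ℝ =>
    p.1 * (D2 u (sg p.1 p.2) (cc' p.2) (cc' p.2)) - fderiv ℝ u (sg p.1 p.2) (cc p.2) := by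
  apply Continuous.sub _ (contDuApp hu)
  exact continuous_fst.mul ((((contD2 hu).comp continuous_sg).clm_apply
    (continuous_cc'.comp continuous_snd)).clm_apply (continuous_cc'.comp continuous_snd))

lemma int_Q_zero (r : ℝ) :
    ∫ θ in (-π)..π, (r * (D2 u (sg r θ) (cc' θ) (cc' θ)) - fderiv ℝ u (sg r θ) (cc θ)) = 0 := by
  have hftc := intervalIntegral.integral_eq_sub_of_hasDerivAt
    (f := fun φ => fderiv ℝ u (sg r φ) (cc' φ))
    (f' := fun θ => r * (D2 u (sg r θ) (cc' θ) (cc' θ)) - fderiv ℝ u (sg r θ) (cc θ))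
    (a := -π) (b := π)
    (fun θ _ => hasDerivAt_k hu r θ)
    (((contQ hu).comp (Continuous.prodMk_right r)).intervalIntegrable _ _)
  rw [hftc]
  have h1 : sg r π = sg r (-π) := by
    unfold sg cc; simp
  have h2 : cc' π = cc' (-π) := by
    unfold cc'; simp
  rw [h1, h2, sub_self]

lemma int_P_r (R θ : ℝ) :
    ∫ r in (0:ℝ)..R, (fderiv ℝ u (sg r θ) (cc θ) + r * (D2 u (sg r θ) (cc θ) (cc θ)))
      = R * fderiv ℝ u (sg R θ) (cc θ) := by
  have hftc := intervalIntegral.integral_eq_sub_of_hasDerivAt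
    (f := fun s => s * (fderiv ℝ u (sg s θ) (cc θ)))
    (f' := fun r => fderiv ℝ u (sg r θ) (cc θ) + r * (D2 u (sg r θ) (cc θ) (cc θ)))
    (a := 0) (b := R)
    (fun r _ => hasDerivAt_h hu r θ)
    (by
      have : Continuous fun r : ℝ =>
          fderiv ℝ u (sg r θ) (cc θ) + r * (D2 u (sg r θ) (cc θ) (cc θ)) :=
        (contP hu).comp (continuous_id.prodMk continuous_const)
      exact this.intervalIntegrable _ _)
  rw [hftc]
  ring

lemma swapP {R : ℝ} (hR : 0 ≤ R) :
    ∫ r in (0:ℝ)..R, (∫ θ in (-π)..π,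
        (fderiv ℝ u (sg r θ) (cc θ) + r * (D2 u (sg r θ) (cc θ) (cc θ))))
    = ∫ θ in (-π)..π, (∫ r in (0:ℝ)..R,
        (fderiv ℝ u (sg r θ) (cc θ) + r * (D2 u (sg r θ) (cc θ) (cc θ)))) := by
  have hπ : (-π) ≤ π := by linarith [Real.pi_pos]
  have hint : Integrable (Function.uncurry fun r θ =>
      (fderiv ℝ u (sg r θ) (cc θ) + r * (D2 u (sg r θ) (cc θ) (cc θ))))
      ((volume.restrict (Set.Ioc 0 R)).prod (volume.restrict (Set.Ioc (-π) π))) := by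
    rw [Measure.prod_restrict]
    have : IntegrableOn (fun p : ℝ × ℝ =>
        (fderiv ℝ u (sg p.1 p.2) (cc p.2) + p.1 * (D2 u (sg p.1 p.2) (cc p.2) (cc p.2))))
        (Set.Icc (0:ℝ) R ×ˢ Set.Icc (-π) π) (volume.prod volume) := by
      rw [← Measure.volume_eq_prod]
      exact (contP hu).continuousOn.integrableOn_compact (isCompact_Icc.prod isCompact_Icc)
    exact this.mono_set (Set.prod_mono Set.Ioc_subset_Icc_self Set.Ioc_subset_Icc_self)
  rw [intervalIntegral.integral_of_le hR, intervalIntegral.integral_of_le hπ]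
  simp_rw [intervalIntegral.integral_of_le hR, intervalIntegral.integral_of_le hπ]
  exact MeasureTheory.integral_integral_swap hint

lemma G_eq {R : ℝ} (hR : 0 ≤ R) :
    ∫ z in Metric.ball (0:E2) R, lap u z
      = R * ∫ θ in (-π)..π, fderiv ℝ u (sg R θ) (cc θ) := by
  rw [polar_ball (lap u) (cont_lap hu) hR]
  have step1 : ∀ r : ℝ, (∫ θ in (-π)..π, r * lap u (sg r θ))
      = ∫ θ in (-π)..π, (fderiv ℝ u (sg r θ) (cc θ) + r * (D2 u (sg r θ) (cc θ) (cc θ))) := by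
    intro r
    have congr1 : (∫ θ in (-π)..π, r * lap u (sg r θ))
        = ∫ θ in (-π)..π,
          ((fderiv ℝ u (sg r θ) (cc θ) + r * (D2 u (sg r θ) (cc θ) (cc θ)))
            + (r * (D2 u (sg r θ) (cc' θ) (cc' θ)) - fderiv ℝ u (sg r θ) (cc θ))) := by
      apply intervalIntegral.integral_congr
      intro θ _
      exact (polar_lap hu r θ).symm
    have iP : IntervalIntegrable
        (fun θ => fderiv ℝ u (sg r θ) (cc θ) + r * (D2 u (sg r θ) (cc θ) (cc θ)))
        volume (-π) π := by
      have : Continuous fun θ =>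
          fderiv ℝ u (sg r θ) (cc θ) + r * (D2 u (sg r θ) (cc θ) (cc θ)) :=
        (contP hu).comp (Continuous.prodMk_right r)
      exact this.intervalIntegrable _ _
    have iQ : IntervalIntegrable
        (fun θ => r * (D2 u (sg r θ) (cc' θ) (cc' θ)) - fderiv ℝ u (sg r θ) (cc θ))
        volume (-π) π := by
      have : Continuous fun θ =>
          r * (D2 u (sg r θ) (cc' θ) (cc' θ)) - fderiv ℝ u (sg r θ) (cc θ) :=
        (contQ hu).comp (Continuous.prodMk_right r)
      exact this.intervalIntegrable _ _
    rw [congr1, intervalIntegral.integral_add iP iQ, int_Q_zero hu r, add_zero]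
  rw [intervalIntegral.integral_congr (fun r _ => step1 r), swapP hu hR]
  have step2 : (∫ θ in (-π)..π, (∫ r in (0:ℝ)..R,
      (fderiv ℝ u (sg r θ) (cc θ) + r * (D2 u (sg r θ) (cc θ) (cc θ)))))
      = ∫ θ in (-π)..π, R * fderiv ℝ u (sg R θ) (cc θ) :=
    intervalIntegral.integral_congr (fun θ _ => int_P_r hu R θ)
  rw [step2, intervalIntegral.integral_const_mul]

end TCmain

noncomputable section TClimit
open Real intervalIntegral

/-- `G R = ∫_{B_R} Δu`. -/
noncomputable def Gm (u : E2 → ℝ) (R : ℝ) : ℝ := ∫ z in Metric.ball (0:E2) R, lap u z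

/-- `Φ R = ∫_{-π}^{π} u(R e^{iθ}) dθ`. -/
noncomputable def Phi (u : E2 → ℝ) (R : ℝ) : ℝ := ∫ θ in (-π)..π, u (sg R θ)

variable {u : E2 → ℝ} (hu : ContDiff ℝ 2 u)
include hu

lemma hasDerivAt_Phi (R : ℝ) :
    HasDerivAt (Phi u) (∫ θ in (-π)..π, fderiv ℝ u (sg R θ) (cc θ)) R := by
  obtain ⟨C, hC⟩ := (isCompact_Icc.prod isCompact_Icc).exists_bound_of_continuousOn
    (s := Set.Icc (R-1) (R+1) ×ˢ Set.Icc (-π) π) (contDuApp hu).continuousOn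
  have key := intervalIntegral.hasDerivAt_integral_of_dominated_loc_of_deriv_le
    (F := fun x θ => u (sg x θ)) (F' := fun x θ => fderiv ℝ u (sg x θ) (cc θ))
    (a := -π) (b := π) (x₀ := R) (bound := fun _ => C) (s := Metric.ball R 1) (Metric.ball_mem_nhds R one_pos)
    (Filter.Eventually.of_forall (fun x =>
      ((hu.continuous.comp (continuous_sg.comp (Continuous.prodMk_right x))).aestronglyMeasurable)))
    (((hu.continuous.comp (continuous_sg.comp (Continuous.prodMk_right R))).intervalIntegrable _ _))
    (((contDuApp hu).comp (Continuous.prodMk_right R)).aestronglyMeasurable)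
    (Filter.Eventually.of_forall (fun θ hθ => fun x hx => by
      have hπ : (-π) ≤ π := by linarith [Real.pi_pos]
      rw [Set.uIoc_of_le hπ] at hθ
      have hmem : (x, θ) ∈ Set.Icc (R-1) (R+1) ×ˢ Set.Icc (-π) π := by
        constructor
        · have := Metric.mem_ball.mp hx
          rw [Real.dist_eq] at this
          have h2 := abs_lt.mp this
          exact ⟨by linarith [h2.1], by linarith [h2.2]⟩
        · exact Set.Ioc_subset_Icc_self hθ
      exact hC (x, θ) hmem))
    (intervalIntegrable_const : IntervalIntegrable (fun _ => C) volume (-π) π)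
    (Filter.Eventually.of_forall (fun θ _ => fun x _ =>
      (hDu hu (sg x θ)).comp_hasDerivAt x (hasDerivAt_sg_r x θ)))
  exact key.2

lemma hasDerivAt_Phi_div {R : ℝ} (hR : 0 < R) :
    HasDerivAt (Phi u) (Gm u R / R) R := by
  have h := hasDerivAt_Phi hu R
  have hG : Gm u R = R * ∫ θ in (-π)..π, fderiv ℝ u (sg R θ) (cc θ) := G_eq hu hR.le
  have : Gm u R / R = ∫ θ in (-π)..π, fderiv ℝ u (sg R θ) (cc θ) := by
    rw [hG]; field_simp
  rwa [this]

omit hu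

lemma intOn_neg_lap (hu : ContDiff ℝ 2 u) {R : ℝ} :
    IntegrableOn (fun z => -lap u z) (Metric.ball (0:E2) R) volume := by
  exact ((cont_lap hu).neg.continuousOn.integrableOn_compact
    (isCompact_closedBall (0:E2) R)).mono_set Metric.ball_subset_closedBall

lemma Gm_nonpos (hu : ContDiff ℝ 2 u) (hsuper : ∀ z, lap u z ≤ 0) (R : ℝ) : Gm u R ≤ 0 := by
  have h : 0 ≤ ∫ z in Metric.ball (0:E2) R, -lap u z :=
    setIntegral_nonneg measurableSet_ball (fun z _ => neg_nonneg.2 (hsuper z))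
  rw [MeasureTheory.integral_neg] at h
  unfold Gm
  linarith

lemma Gm_antitone (hu : ContDiff ℝ 2 u) (hsuper : ∀ z, lap u z ≤ 0) : Antitone (Gm u) := by
  intro R₁ R₂ h
  have key : (∫ z in Metric.ball (0:E2) R₁, -lap u z)
      ≤ ∫ z in Metric.ball (0:E2) R₂, -lap u z := by
    apply setIntegral_mono_set (intOn_neg_lap hu)
    · exact Filter.Eventually.of_forall (fun z => neg_nonneg.2 (hsuper z))
    · exact HasSubset.Subset.eventuallyLE (Metric.ball_subset_ball h)
  rw [MeasureTheory.integral_neg, MeasureTheory.integral_neg] at key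
  unfold Gm
  linarith

lemma Gm_intervalIntegrable (hu : ContDiff ℝ 2 u) (hsuper : ∀ z, lap u z ≤ 0)
    {a b : ℝ} (ha : 1 ≤ a) (hab : a ≤ b) :
    IntervalIntegrable (fun r => Gm u r / r) volume a b := by
  rw [intervalIntegrable_iff, Set.uIoc_of_le hab]
  have hmeas : Measurable (Gm u) := (Gm_antitone hu hsuper).measurable
  apply Integrable.mono' (g := fun _ => -Gm u b)
  · exact integrableOn_const measure_Ioc_lt_top.ne
  · exact ((hmeas.div measurable_id).aestronglyMeasurable).restrict
  · apply (ae_restrict_iff' measurableSet_Ioc).2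
    apply Filter.Eventually.of_forall
    intro r hr
    have hr1 : (1:ℝ) < r := lt_of_le_of_lt ha hr.1
    have hrb : r ≤ b := hr.2
    have h1 : Gm u b ≤ Gm u r := Gm_antitone hu hsuper hrb
    have h2 : Gm u r ≤ 0 := Gm_nonpos hu hsuper r
    rw [Real.norm_eq_abs, abs_div, abs_of_pos (by linarith : (0:ℝ) < r),
      abs_of_nonpos h2]
    rw [div_le_iff₀ (by linarith : (0:ℝ) < r)]
    nlinarith

lemma Phi_ftc (hu : ContDiff ℝ 2 u) (hsuper : ∀ z, lap u z ≤ 0)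
    {R : ℝ} (hR : 1 ≤ R) :
    Phi u R - Phi u 1 = ∫ r in (1:ℝ)..R, Gm u r / r := by
  rw [intervalIntegral.integral_eq_sub_of_hasDerivAt
    (f := Phi u) (f' := fun r => Gm u r / r)
    (fun r hr => by
      rw [Set.uIcc_of_le hR] at hr
      exact hasDerivAt_Phi_div hu (by linarith [hr.1]))
    (Gm_intervalIntegrable hu hsuper le_rfl hR)]

lemma Phi_log_tendsto (hu : ContDiff ℝ 2 u) {m : ℝ}
    (hasymp : Filter.Tendsto (fun z => u z / Real.log ‖z‖)
      (Filter.comap norm Filter.atTop) (nhds (-m))) :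
    Filter.Tendsto (fun R => Phi u R / Real.log R) Filter.atTop (nhds (-(2 * π * m))) := by
  rw [Metric.tendsto_atTop]
  intro ε hε
  have hπ : (0:ℝ) < π := Real.pi_pos
  have hπ' : (-π) ≤ π := by linarith
  set ε' : ℝ := ε / (4 * π) with hε'def
  have hε' : 0 < ε' := by positivity
  have hev := Metric.tendsto_nhds.mp hasymp ε' hε'
  rw [Filter.eventually_comap] at hev
  rw [Filter.eventually_atTop] at hev
  obtain ⟨M, hM⟩ := hev
  refine ⟨max M 2, fun R hR => ?_⟩
  have hR2 : (2:ℝ) ≤ R := le_trans (le_max_right M 2) hR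
  have hRM : M ≤ R := le_trans (le_max_left M 2) hR
  have hlog : 0 < Real.log R := Real.log_pos (by linarith)
  have hRpos : (0:ℝ) < R := by linarith
  -- pointwise bound
  have hbd : ∀ θ : ℝ, ‖u (sg R θ) + m * Real.log R‖ ≤ ε' * Real.log R := by
    intro θ
    have hnorm : ‖sg R θ‖ = R := by rw [norm_sg, abs_of_pos hRpos]
    have h1 := hM ‖sg R θ‖ (by rw [hnorm]; exact hRM) (sg R θ) rfl
    rw [hnorm] at h1
    rw [Real.dist_eq, sub_neg_eq_add] at h1
    have h2 : u (sg R θ) + m * Real.log R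
        = (u (sg R θ) / Real.log R + m) * Real.log R := by
      field_simp
    rw [h2, Real.norm_eq_abs, abs_mul, abs_of_pos hlog]
    exact mul_le_mul_of_nonneg_right h1.le hlog.le
  -- integral identity
  have hiu : IntervalIntegrable (fun θ => u (sg R θ)) volume (-π) π :=
    (hu.continuous.comp (continuous_sg.comp (Continuous.prodMk_right R))).intervalIntegrable _ _
  have hid : Phi u R + 2 * π * m * Real.log R
      = ∫ θ in (-π)..π, (u (sg R θ) + m * Real.log R) := by
    rw [intervalIntegral.integral_add hiu intervalIntegrable_const,
      intervalIntegral.integral_const]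
    unfold Phi
    simp only [smul_eq_mul]
    ring
  have hbound : ‖∫ θ in (-π)..π, (u (sg R θ) + m * Real.log R)‖
      ≤ ε' * Real.log R * |π - (-π)| :=
    intervalIntegral.norm_integral_le_of_norm_le_const (fun θ _ => hbd θ)
  rw [← hid] at hbound
  have habs : |π - (-π)| = 2 * π := by
    rw [abs_of_pos (by linarith)]; ring
  rw [habs] at hbound
  rw [Real.dist_eq]
  have key : Phi u R / Real.log R - (-(2 * π * m))
      = (Phi u R + 2 * π * m * Real.log R) / Real.log R := by
    field_simp
    ring
  rw [key, abs_div, abs_of_pos hlog, div_lt_iff₀ hlog]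
  rw [Real.norm_eq_abs] at hbound
  calc |Phi u R + 2 * π * m * Real.log R| ≤ ε' * Real.log R * (2 * π) := hbound
    _ = (ε / 2) * Real.log R := by rw [hε'def]; field_simp; ring
    _ < ε * Real.log R := by nlinarith

lemma tendsto_div_log (c : ℝ) :
    Filter.Tendsto (fun R : ℝ => c / Real.log R) Filter.atTop (nhds 0) := by
  have h : Filter.Tendsto (fun R : ℝ => (Real.log R)⁻¹) Filter.atTop (nhds 0) :=
    Real.tendsto_log_atTop.inv_tendsto_atTop
  have := h.const_mul c
  simpa [div_eq_mul_inv] using this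

variable {m : ℝ}

lemma Gm_lower (hu : ContDiff ℝ 2 u) (hsuper : ∀ z, lap u z ≤ 0)
    (hasymp : Filter.Tendsto (fun z => u z / Real.log ‖z‖)
      (Filter.comap norm Filter.atTop) (nhds (-m)))
    {r₁ : ℝ} (hr₁ : 1 ≤ r₁) : -(2 * π * m) ≤ Gm u r₁ := by
  set C : ℝ := ∫ r in (1:ℝ)..r₁, Gm u r / r with hC
  have hr₁pos : (0:ℝ) < r₁ := by linarith
  -- eventual upper bound for Phi R / log R
  have hev : ∀ R : ℝ, max r₁ 2 ≤ R →
      Phi u R / Real.log R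
        ≤ (Phi u 1 + C - Gm u r₁ * Real.log r₁) / Real.log R + Gm u r₁ := by
    intro R hR
    have hRr : r₁ ≤ R := le_trans (le_max_left _ _) hR
    have hR2 : (2:ℝ) ≤ R := le_trans (le_max_right _ _) hR
    have hlog : 0 < Real.log R := Real.log_pos (by linarith)
    have hsplit : Phi u R - Phi u 1 = C + ∫ r in r₁..R, Gm u r / r := by
      rw [Phi_ftc hu hsuper (by linarith : (1:ℝ) ≤ R), hC,
        ← intervalIntegral.integral_add_adjacent_intervals
          (Gm_intervalIntegrable hu hsuper le_rfl hr₁)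
          (Gm_intervalIntegrable hu hsuper hr₁ hRr)]
    have hmono : (∫ r in r₁..R, Gm u r / r)
        ≤ ∫ r in r₁..R, Gm u r₁ / r := by
      apply intervalIntegral.integral_mono_on hRr
        (Gm_intervalIntegrable hu hsuper hr₁ hRr)
      · apply ContinuousOn.intervalIntegrable
        apply ContinuousOn.div continuousOn_const continuousOn_id
        intro x hx
        rw [Set.uIcc_of_le hRr] at hx
        intro h0; simp only [id_eq] at h0; rw [h0] at hx; linarith [hx.1]
      · intro r hr
        have hrpos : 0 < r := by linarith [hr.1]
        exact (div_le_div_iff_of_pos_right hrpos).2 (Gm_antitone hu hsuper hr.1)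
    have hval : (∫ r in r₁..R, Gm u r₁ / r)
        = Gm u r₁ * (Real.log R - Real.log r₁) := by
      simp_rw [div_eq_mul_inv]
      rw [intervalIntegral.integral_const_mul, integral_inv (by
        rw [Set.uIcc_of_le hRr]
        intro h0
        have := h0.1
        linarith)]
      rw [Real.log_div (by linarith) (by linarith)]
    have h1 : Phi u R ≤ Phi u 1 + C + Gm u r₁ * (Real.log R - Real.log r₁) := by
      rw [hval] at hmono
      linarith [hsplit, hmono]
    have h2 : Phi u R / Real.log R
        ≤ (Phi u 1 + C + Gm u r₁ * (Real.log R - Real.log r₁)) / Real.log R :=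
      (div_le_div_iff_of_pos_right hlog).2 h1
    have h3 : (Phi u 1 + C + Gm u r₁ * (Real.log R - Real.log r₁)) / Real.log R
        = (Phi u 1 + C - Gm u r₁ * Real.log r₁) / Real.log R + Gm u r₁ := by
      field_simp
      ring
    linarith [h2, h3 ▸ h2]
  -- pass to the limit
  have htend : Filter.Tendsto
      (fun R => (Phi u 1 + C - Gm u r₁ * Real.log r₁) / Real.log R + Gm u r₁)
      Filter.atTop (nhds (Gm u r₁)) := by
    have := (tendsto_div_log (Phi u 1 + C - Gm u r₁ * Real.log r₁)).add_const (Gm u r₁)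
    simpa using this
  have := le_of_tendsto_of_tendsto (Phi_log_tendsto hu hasymp) htend
    (by
      rw [Filter.EventuallyLE, Filter.eventually_atTop]
      exact ⟨max r₁ 2, hev⟩)
  linarith

lemma Gm_zero : Gm u 0 = 0 := by
  unfold Gm
  rw [Metric.ball_zero]
  simp

lemma Gm_nat_tendsto (hu : ContDiff ℝ 2 u) (hsuper : ∀ z, lap u z ≤ 0)
    (hasymp : Filter.Tendsto (fun z => u z / Real.log ‖z‖)
      (Filter.comap norm Filter.atTop) (nhds (-m))) :
    Filter.Tendsto (fun n : ℕ => -Gm u (n:ℝ)) Filter.atTop (nhds (2 * π * m)) := by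
  have hL0 : 0 ≤ 2 * π * m := by
    have h1 := Gm_lower hu hsuper hasymp (le_refl (1:ℝ))
    have h2 := Gm_nonpos hu hsuper 1
    linarith
  have hbdd : ∀ n : ℕ, -Gm u (n:ℝ) ≤ 2 * π * m := by
    intro n
    rcases Nat.eq_zero_or_pos n with h0 | h1
    · rw [h0]; push_cast; rw [Gm_zero]; linarith
    · have : (1:ℝ) ≤ (n:ℝ) := by exact_mod_cast h1
      linarith [Gm_lower hu hsuper hasymp this]
  have hmono : Monotone fun n : ℕ => -Gm u (n:ℝ) := fun a b hab =>
    neg_le_neg (Gm_antitone hu hsuper (by exact_mod_cast hab))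
  have hbddA : BddAbove (Set.range fun n : ℕ => -Gm u (n:ℝ)) :=
    ⟨2 * π * m, Set.forall_mem_range.2 hbdd⟩
  have htendS := tendsto_atTop_ciSup hmono hbddA
  set S : ℝ := ⨆ n : ℕ, -Gm u (n:ℝ) with hSdef
  have hSle : S ≤ 2 * π * m := ciSup_le hbdd
  -- lower bound on Gm by -S
  have hGm_ge : ∀ r : ℝ, -S ≤ Gm u r := by
    intro r
    have h1 : -Gm u r ≤ -Gm u ((⌈r⌉₊ : ℝ)) :=
      neg_le_neg (Gm_antitone hu hsuper (Nat.le_ceil r))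
    have h2 : -Gm u ((⌈r⌉₊ : ℝ)) ≤ S := le_ciSup hbddA ⌈r⌉₊
    linarith
  -- show 2πm ≤ S
  have hev : ∀ R : ℝ, (2:ℝ) ≤ R →
      Phi u 1 / Real.log R + (-S) ≤ Phi u R / Real.log R := by
    intro R hR2
    have hlog : 0 < Real.log R := Real.log_pos (by linarith)
    have hR1 : (1:ℝ) ≤ R := by linarith
    have hsplit : Phi u R - Phi u 1 = ∫ r in (1:ℝ)..R, Gm u r / r :=
      Phi_ftc hu hsuper hR1
    have hmono2 : (∫ r in (1:ℝ)..R, -S / r) ≤ ∫ r in (1:ℝ)..R, Gm u r / r := by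
      apply intervalIntegral.integral_mono_on hR1
      · apply ContinuousOn.intervalIntegrable
        apply ContinuousOn.div continuousOn_const continuousOn_id
        intro x hx
        rw [Set.uIcc_of_le hR1] at hx
        intro h0; simp only [id_eq] at h0; rw [h0] at hx; linarith [hx.1]
      · exact Gm_intervalIntegrable hu hsuper le_rfl hR1
      · intro r hr
        have hrpos : 0 < r := by linarith [hr.1]
        exact (div_le_div_iff_of_pos_right hrpos).2 (hGm_ge r)
    have hval : (∫ r in (1:ℝ)..R, -S / r) = -S * Real.log R := by
      simp_rw [div_eq_mul_inv]
      rw [intervalIntegral.integral_const_mul, integral_inv (by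
        rw [Set.uIcc_of_le hR1]
        intro h0
        have := h0.1
        linarith)]
      simp
    have h1 : Phi u 1 + (-S) * Real.log R ≤ Phi u R := by
      rw [hval] at hmono2
      linarith
    have h2 : (Phi u 1 + (-S) * Real.log R) / Real.log R ≤ Phi u R / Real.log R :=
      (div_le_div_iff_of_pos_right hlog).2 h1
    have h3 : (Phi u 1 + (-S) * Real.log R) / Real.log R
        = Phi u 1 / Real.log R + (-S) := by
      field_simp
    linarith [h3 ▸ h2]
  have htendlow : Filter.Tendsto
      (fun R => Phi u 1 / Real.log R + (-S)) Filter.atTop (nhds (-S)) := by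
    have := (tendsto_div_log (Phi u 1)).add_const (-S)
    simpa using this
  have hge := le_of_tendsto_of_tendsto htendlow (Phi_log_tendsto hu hasymp)
    (by
      rw [Filter.EventuallyLE, Filter.eventually_atTop]
      exact ⟨2, hev⟩)
  have hSeq : S = 2 * π * m := le_antisymm hSle (by linarith)
  rw [← hSeq]
  exact htendS

end TClimit

/-- If `u` is `C²` on `ℝ²` with `Δu ≤ 0`, and `u(z) = -m log|z| + o(log|z|)` as
`|z| → ∞`, then the total mass `∫_{ℝ²} (-Δu) dA` equals `2πm`; in particular if
`Δu` is not identically zero then `m > 0`. -/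
theorem total_curvature_eq_two_pi_m
    (u : EuclideanSpace ℝ (Fin 2) → ℝ) (m : ℝ)
    (hu : ContDiff ℝ 2 u)
    (hsuper : ∀ z, lap u z ≤ 0)
    (hasymp : Tendsto (fun z => u z / Real.log ‖z‖) (comap norm atTop) (nhds (-m))) :
    (∫⁻ z, ENNReal.ofReal (-lap u z)) = ENNReal.ofReal (2 * Real.pi * m) ∧
    ((∃ z, lap u z ≠ 0) → 0 < m) := by
  have hmeas : Measurable fun z : E2 => ENNReal.ofReal (-lap u z) :=
    ((cont_lap hu).neg.measurable).ennreal_ofReal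
  have hball : ∀ n : ℕ, (∫⁻ z in Metric.ball (0:E2) (n:ℝ), ENNReal.ofReal (-lap u z))
      = ENNReal.ofReal (-Gm u (n:ℝ)) := by
    intro n
    have hInt : IntegrableOn (fun z => -lap u z) (Metric.ball (0:E2) (n:ℝ)) volume :=
      intOn_neg_lap hu
    rw [← ofReal_integral_eq_lintegral_ofReal hInt
      (Filter.Eventually.of_forall (fun z => neg_nonneg.2 (hsuper z)))]
    congr 1
    rw [MeasureTheory.integral_neg]
    rfl
  have hmono_ind : Monotone fun n : ℕ =>
      (Metric.ball (0:E2) (n:ℝ)).indicator (fun z => ENNReal.ofReal (-lap u z)) := by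
    intro a b hab
    exact Set.indicator_le_indicator_of_subset
      (Metric.ball_subset_ball (by exact_mod_cast hab)) (fun z => zero_le)
  have hsup : ∀ z : E2, (⨆ n : ℕ,
      (Metric.ball (0:E2) (n:ℝ)).indicator (fun z => ENNReal.ofReal (-lap u z)) z)
        = ENNReal.ofReal (-lap u z) := by
    intro z
    apply le_antisymm
    · exact iSup_le fun n => Set.indicator_le_self _ _ z
    · obtain ⟨n, hn⟩ := exists_nat_gt ‖z‖
      have hmem : z ∈ Metric.ball (0:E2) (n:ℝ) := by
        rw [Metric.mem_ball, dist_zero_right]; exact hn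
      calc ENNReal.ofReal (-lap u z)
          = (Metric.ball (0:E2) (n:ℝ)).indicator
              (fun z => ENNReal.ofReal (-lap u z)) z := (Set.indicator_of_mem hmem (fun z => ENNReal.ofReal (-lap u z))).symm
        _ ≤ _ := le_iSup (fun n : ℕ => (Metric.ball (0:E2) (n:ℝ)).indicator
              (fun z => ENNReal.ofReal (-lap u z)) z) n
  have hkey : (∫⁻ z, ENNReal.ofReal (-lap u z))
      = ⨆ n : ℕ, ENNReal.ofReal (-Gm u (n:ℝ)) := by
    calc (∫⁻ z, ENNReal.ofReal (-lap u z))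
        = ∫⁻ z, ⨆ n : ℕ, (Metric.ball (0:E2) (n:ℝ)).indicator
            (fun z => ENNReal.ofReal (-lap u z)) z := by
          apply lintegral_congr
          intro z
          rw [hsup z]
      _ = ⨆ n : ℕ, ∫⁻ z, (Metric.ball (0:E2) (n:ℝ)).indicator
            (fun z => ENNReal.ofReal (-lap u z)) z :=
          lintegral_iSup (fun n => hmeas.indicator measurableSet_ball) hmono_ind
      _ = ⨆ n : ℕ, ∫⁻ z in Metric.ball (0:E2) (n:ℝ), ENNReal.ofReal (-lap u z) := by
          congr 1
          funext n
          rw [lintegral_indicator measurableSet_ball]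
      _ = ⨆ n : ℕ, ENNReal.ofReal (-Gm u (n:ℝ)) := by
          congr 1
          funext n
          exact hball n
  have htend : Tendsto (fun n : ℕ => ENNReal.ofReal (-Gm u (n:ℝ))) atTop
      (nhds (ENNReal.ofReal (2 * Real.pi * m))) :=
    ENNReal.tendsto_ofReal (Gm_nat_tendsto hu hsuper hasymp)
  have hmonoG : Monotone fun n : ℕ => ENNReal.ofReal (-Gm u (n:ℝ)) := fun a b hab =>
    ENNReal.ofReal_le_ofReal (neg_le_neg (Gm_antitone hu hsuper (by exact_mod_cast hab)))
  have hmain : (∫⁻ z, ENNReal.ofReal (-lap u z)) = ENNReal.ofReal (2 * Real.pi * m) := by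
    rw [hkey]
    exact tendsto_nhds_unique (tendsto_atTop_iSup hmonoG) htend
  refine ⟨hmain, ?_⟩
  rintro ⟨z₀, hz⟩
  have hneg : lap u z₀ < 0 := lt_of_le_of_ne (hsuper z₀) hz
  set c : ℝ := -lap u z₀ with hc
  have hcpos : 0 < c := by simp [hc]; linarith
  obtain ⟨δ, hδpos, hδ⟩ := Metric.continuousAt_iff.mp (cont_lap hu).continuousAt
    (c/2) (by linarith)
  have hlow : ∀ z ∈ Metric.ball z₀ δ, ENNReal.ofReal (c/2) ≤ ENNReal.ofReal (-lap u z) := by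
    intro z hzmem
    apply ENNReal.ofReal_le_ofReal
    have := hδ (Metric.mem_ball.mp hzmem)
    rw [Real.dist_eq] at this
    have h2 := abs_lt.mp this
    simp only [hc]
    linarith [h2.1, h2.2]
  have hchain : ENNReal.ofReal (c/2) * volume (Metric.ball z₀ δ)
      ≤ ENNReal.ofReal (2 * Real.pi * m) := by
    rw [← hmain]
    calc ENNReal.ofReal (c/2) * volume (Metric.ball z₀ δ)
        = ∫⁻ _ in Metric.ball z₀ δ, ENNReal.ofReal (c/2) := by
          rw [setLIntegral_const]
      _ ≤ ∫⁻ z in Metric.ball z₀ δ, ENNReal.ofReal (-lap u z) :=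
          setLIntegral_mono hmeas hlow
      _ ≤ ∫⁻ z, ENNReal.ofReal (-lap u z) := setLIntegral_le_lintegral _ _
  have hpos : 0 < ENNReal.ofReal (2 * Real.pi * m) := by
    apply lt_of_lt_of_le _ hchain
    apply ENNReal.mul_pos
    · exact (ENNReal.ofReal_pos.2 (by linarith)).ne'
    · exact (Metric.measure_ball_pos volume z₀ hδpos).ne'
  have := ENNReal.ofReal_pos.mp hpos
  nlinarith [Real.pi_pos]
end TCaux
end

section
/- Let f : ℂ → ℂ be an entire (everywhere complex-differentiable) function and suppose that for some p ≥ 1 the integral ∫_ℂ |f(z)|^p dA(z) with respect to Lebesgue measure on ℂ ≅ ℝ² is finite. Then f is identically zero. -/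
open MeasureTheory
open scoped ENNReal

section LpLiouvilleAux

open Set Real Metric
open scoped Real

namespace LpLiouville

theorem lintegral_comp_polarCoord_symm' (g : ℝ × ℝ → ℝ≥0∞) :
    (∫⁻ p in polarCoord.target, ENNReal.ofReal p.1 * g (polarCoord.symm p)) = ∫⁻ p, g p := by
  set B : ℝ × ℝ → ℝ × ℝ →L[ℝ] ℝ × ℝ := fun p =>
    LinearMap.toContinuousLinearMap (Matrix.toLin (Module.Basis.finTwoProd ℝ) (Module.Basis.finTwoProd ℝ)
      !![Real.cos p.2, -p.1 * Real.sin p.2; Real.sin p.2, p.1 * Real.cos p.2]) with hB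
  have A : ∀ p ∈ polarCoord.symm.source, HasFDerivAt polarCoord.symm (B p) p := fun p _ =>
    hasFDerivAt_polarCoord_symm p
  have B_det : ∀ p, (B p).det = p.1 := by
    intro p
    conv_rhs => rw [← one_mul p.1, ← cos_sq_add_sin_sq p.2]
    simp only [hB, neg_mul, LinearMap.det_toContinuousLinearMap, LinearMap.det_toLin,
      Matrix.det_fin_two_of, sub_neg_eq_add]
    ring
  symm
  calc
    ∫⁻ p, g p = ∫⁻ p in polarCoord.source, g p := by
      rw [← setLIntegral_univ]
      exact (setLIntegral_congr polarCoord_source_ae_eq_univ.symm)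
    _ = ∫⁻ p in polarCoord.target, ENNReal.ofReal |(B p).det| * g (polarCoord.symm p) := by
      rw [← polarCoord.symm_image_target_eq_source]
      refine lintegral_image_eq_lintegral_abs_det_fderiv_mul volume
        polarCoord.open_target.measurableSet (fun p hp => (A p hp).hasFDerivWithinAt)
        polarCoord.symm.injOn g
    _ = ∫⁻ p in polarCoord.target, ENNReal.ofReal p.1 * g (polarCoord.symm p) := by
      refine setLIntegral_congr_fun polarCoord.open_target.measurableSet
        (fun p hp => ?_)
      rw [B_det, abs_of_pos hp.1]


theorem complex_lintegral_comp_polarCoord_symm (g : ℂ → ℝ≥0∞) (hg : Measurable g) :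
    (∫⁻ p in polarCoord.target, ENNReal.ofReal p.1 * g (Complex.polarCoord.symm p)) = ∫⁻ z, g z := by
  rw [← (Complex.volume_preserving_equiv_real_prod.symm).lintegral_comp hg,
    ← lintegral_comp_polarCoord_symm' (fun p => g (Complex.measurableEquivRealProd.symm p))]
  rfl

theorem meanvalue (f : ℂ → ℂ) (hf : Differentiable ℂ f) {r : ℝ} (hr : 0 < r) :
    ∫ θ in (0:ℝ)..(2*π), f (circleMap 0 r θ) = (2*π:ℝ) • f 0 := by
  have h1 : (∮ z in C(0, r), (z - 0)⁻¹ • f z) = (2 * π * Complex.I : ℂ) • f 0 :=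
    (hf.differentiableOn : DifferentiableOn ℂ f (closedBall 0 r)).circleIntegral_sub_inv_smul
      (mem_ball_self hr)
  rw [circleIntegral] at h1
  simp only [deriv_circleMap, sub_zero, smul_eq_mul] at h1
  have h2 : ∀ θ : ℝ, circleMap 0 r θ * Complex.I * ((circleMap 0 r θ)⁻¹ * f (circleMap 0 r θ))
      = Complex.I * f (circleMap 0 r θ) := by
    intro θ
    have hne : circleMap 0 r θ ≠ 0 := circleMap_ne_center hr.ne'
    field_simp
  rw [intervalIntegral.integral_congr (fun θ _ => h2 θ)] at h1
  rw [intervalIntegral.integral_const_mul] at h1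
  have hI : (Complex.I : ℂ) ≠ 0 := Complex.I_ne_zero
  have h3 : Complex.I * ∫ θ in (0:ℝ)..(2*π), f (circleMap 0 r θ)
      = Complex.I * ((2*π:ℝ) • f 0) := by
    rw [h1, Complex.real_smul]; push_cast; ring
  exact mul_left_cancel₀ hI h3

theorem circle_bound (f : ℂ → ℂ) (hf : Differentiable ℂ f) (p : ℝ) (hp : 1 ≤ p) {r : ℝ}
    (hr : 0 < r) :
    ENNReal.ofReal (2*π) * ENNReal.ofReal (‖f 0‖ ^ p)
      ≤ ∫⁻ θ in Ioo (-π) π, ENNReal.ofReal (‖f (circleMap 0 r θ)‖ ^ p) := by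
  set F : ℝ → ℝ := fun θ => ‖f (circleMap 0 r θ)‖ with hF
  have hFc : Continuous F := (hf.continuous.comp (continuous_circleMap 0 r)).norm
  have hper : Function.Periodic F (2*π) := fun θ => by
    simp only [hF, (periodic_circleMap 0 r) θ]
  have h1 : 2*π*‖f 0‖ ≤ ∫ θ in (-π)..π, F θ := by
    have := intervalIntegral.norm_integral_le_integral_norm (μ := volume)
      (f := fun θ => f (circleMap 0 r θ)) two_pi_pos.le
    rw [meanvalue f hf hr, norm_smul, Real.norm_eq_abs, abs_of_pos two_pi_pos] at this
    have hshift : ∫ θ in (0:ℝ)..(0+2*π), F θ = ∫ θ in (-π)..(-π+2*π), F θ :=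
      hper.intervalIntegral_add_eq 0 (-π)
    rw [zero_add] at hshift
    rw [hshift] at this
    convert this using 2
    ring
  -- convert to lintegral over Ioo
  have h2 : ENNReal.ofReal (2*π) * ENNReal.ofReal ‖f 0‖
      ≤ ∫⁻ θ in Ioo (-π) π, ENNReal.ofReal (F θ) := by
    rw [← ENNReal.ofReal_mul two_pi_pos.le]
    calc ENNReal.ofReal (2*π*‖f 0‖) ≤ ENNReal.ofReal (∫ θ in (-π)..π, F θ) :=
          ENNReal.ofReal_le_ofReal h1
      _ = ENNReal.ofReal (∫ θ in Ioc (-π) π, F θ) := by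
          rw [intervalIntegral.integral_of_le (by linarith [pi_pos])]
      _ = ∫⁻ θ in Ioc (-π) π, ENNReal.ofReal (F θ) :=
          ofReal_integral_eq_lintegral_ofReal (hFc.integrableOn_Ioc)
            (Filter.Eventually.of_forall fun θ => norm_nonneg _)
      _ = ∫⁻ θ in Ioo (-π) π, ENNReal.ofReal (F θ) :=
          (setLIntegral_congr Ioo_ae_eq_Ioc).symm
  have hrw : ∀ θ : ℝ, ENNReal.ofReal (F θ) ^ p = ENNReal.ofReal (F θ ^ p) := fun θ =>
    ENNReal.ofReal_rpow_of_nonneg (norm_nonneg _) (by linarith)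
  rcases eq_or_lt_of_le hp with hp1 | hp1
  · simp only [← hp1, Real.rpow_one]
    exact h2
  -- Hölder
  · set μ := volume.restrict (Ioo (-π:ℝ) π) with hμ
    set G := fun θ => ENNReal.ofReal (F θ) with hG
    set q := p.conjExponent with hq
    have hpq : p.HolderConjugate q := Real.HolderConjugate.conjExponent hp1
    have hGm : AEMeasurable G μ := (hFc.measurable.ennreal_ofReal).aemeasurable
    have hHolder := ENNReal.lintegral_mul_le_Lp_mul_Lq μ hpq hGm aemeasurable_const (g := fun _ => (1:ℝ≥0∞))
    simp only [mul_one, one_mul, Pi.mul_apply, ENNReal.one_rpow, lintegral_const] at hHolder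
    -- μ univ = ofReal (2π)
    have hμu : μ univ = ENNReal.ofReal (2*π) := by
      rw [hμ, Measure.restrict_apply MeasurableSet.univ, univ_inter, Real.volume_Ioo]
      congr 1; ring
    rw [hμu] at hHolder
    set T := ENNReal.ofReal (2*π) with hT
    set Gp := ∫⁻ θ, G θ ^ p ∂μ with hGp
    have hTne : T ≠ 0 := by
      simp only [hT, ENNReal.ofReal_eq_zero, not_le]
      positivity
    have hTnetop : T ≠ ⊤ := ENNReal.ofReal_ne_top
    -- h2 : T * A ≤ ∫⁻ G ∂μ ≤ Gp^(1/p) * T^(1/q)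
    set A := ENNReal.ofReal ‖f 0‖ with hA
    have key : T * A ≤ Gp ^ (1/p) * T ^ (1/q) := le_trans h2 hHolder
    have hp0 : (0:ℝ) < p := by linarith
    have hq0 : (0:ℝ) < q := hpq.symm.pos
    have key2 : (T * A) ^ p ≤ Gp * T ^ (p/q) := by
      calc (T * A) ^ p ≤ (Gp ^ (1/p) * T ^ (1/q)) ^ p :=
            ENNReal.rpow_le_rpow key hp0.le
        _ = Gp ^ ((1/p)*p) * T ^ ((1/q)*p) := by
            rw [ENNReal.mul_rpow_of_nonneg _ _ hp0.le, ← ENNReal.rpow_mul, ← ENNReal.rpow_mul]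
        _ = Gp * T ^ (p/q) := by
            rw [one_div, inv_mul_cancel₀ hp0.ne', ENNReal.rpow_one]
            congr 1
            field_simp
    have hTp : T ^ p = T ^ (p/q) * T := by
      have hfact : p = p/q + 1 := by
        have : p⁻¹ + q⁻¹ = 1 := by simpa using hpq.inv_add_inv_eq_inv
        field_simp at this ⊢
        nlinarith [hpq.symm.pos]
      nth_rewrite 1 [hfact]
      rw [ENNReal.rpow_add _ _ hTne hTnetop, ENNReal.rpow_one]
    have key3 : T ^ (p/q) * (T * A ^ p) ≤ T ^ (p/q) * Gp := by
      calc T ^ (p/q) * (T * A ^ p) = T ^ p * A ^ p := by rw [hTp]; ring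
        _ = (T * A) ^ p := (ENNReal.mul_rpow_of_nonneg _ _ hp0.le).symm
        _ ≤ Gp * T ^ (p/q) := key2
        _ = T ^ (p/q) * Gp := mul_comm _ _
    have hc0 : T ^ (p/q) ≠ 0 := by
      simp [ENNReal.rpow_eq_zero_iff, hTne, hTnetop]
    have hctop : T ^ (p/q) ≠ ⊤ := by
      simp [ENNReal.rpow_eq_top_iff, hTne, hTnetop]
    have key4 : T * A ^ p ≤ Gp := (ENNReal.mul_le_mul_iff_right hc0 hctop).mp key3
    calc T * ENNReal.ofReal (‖f 0‖ ^ p) = T * A ^ p := by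
          rw [hA, ENNReal.ofReal_rpow_of_nonneg (norm_nonneg _) hp0.le]
      _ ≤ Gp := key4
      _ = ∫⁻ θ in Ioo (-π) π, ENNReal.ofReal (F θ ^ p) := by
          rw [hGp]; exact lintegral_congr fun θ => by rw [hG, hrw]

theorem key_zero (f : ℂ → ℂ) (hf : Differentiable ℂ f) (p : ℝ) (hp : 1 ≤ p)
    (hint : ∫⁻ z : ℂ, ENNReal.ofReal (‖f z‖ ^ p) < ⊤) : f 0 = 0 := by
  by_contra hne
  set g : ℂ → ℝ≥0∞ := fun z => ENNReal.ofReal (‖f z‖ ^ p) with hg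
  have hgm : Measurable g :=
    ((hf.continuous.norm.rpow_const fun x => Or.inr (by linarith)).measurable).ennreal_ofReal
  have hcm : ∀ a : ℝ × ℝ, (Complex.polarCoord.symm a : ℂ) = circleMap 0 a.1 a.2 := by
    intro a
    simp [Complex.polarCoord_symm_apply, circleMap, Complex.exp_mul_I]
  have hcmc : Continuous fun a : ℝ × ℝ => circleMap 0 a.1 a.2 := by
    simp only [circleMap]
    continuity
  set F : ℝ × ℝ → ℝ≥0∞ := fun a => ENNReal.ofReal a.1 * g (circleMap 0 a.1 a.2) with hFdef
  have hFm : Measurable F :=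
    (measurable_fst.ennreal_ofReal).mul (hgm.comp hcmc.measurable)
  have hpolar : ∫⁻ a in Ioi (0:ℝ) ×ˢ Ioo (-π) π, F a = ∫⁻ z, g z := by
    rw [← complex_lintegral_comp_polarCoord_symm g hgm]
    have htarget : polarCoord.target = Ioi (0:ℝ) ×ˢ Ioo (-π) π := rfl
    rw [htarget]
    refine setLIntegral_congr_fun (measurableSet_Ioi.prod measurableSet_Ioo)
      (fun a _ => ?_)
    rw [hFdef, hcm]
  have hiter : ∫⁻ r in Ioi (0:ℝ), ∫⁻ θ in Ioo (-π) π, F (r, θ) = ∫⁻ z, g z := by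
    rw [← hpolar]
    rw [show (volume : Measure (ℝ × ℝ)).restrict (Ioi (0:ℝ) ×ˢ Ioo (-π) π)
        = ((volume : Measure ℝ).restrict (Ioi 0)).prod
            ((volume : Measure ℝ).restrict (Ioo (-π) π)) by
      rw [Measure.prod_restrict, ← Measure.volume_eq_prod]]
    exact (lintegral_prod F hFm.aemeasurable).symm
  set T := ENNReal.ofReal (2*π) with hT
  set C := ENNReal.ofReal (‖f 0‖ ^ p) with hC
  have hC0 : C ≠ 0 := by
    rw [hC, Ne, ENNReal.ofReal_eq_zero, not_le]
    exact Real.rpow_pos_of_pos (norm_pos_iff.2 hne) p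
  have hT0 : T ≠ 0 := by
    rw [hT, Ne, ENNReal.ofReal_eq_zero, not_le]
    positivity
  have hTC : T * C ≠ 0 := mul_ne_zero hT0 hC0
  have hTCtop : T * C ≠ ⊤ := ENNReal.mul_ne_top ENNReal.ofReal_ne_top ENNReal.ofReal_ne_top
  have hlow : ∀ r ∈ Ioi (0:ℝ), ENNReal.ofReal r * (T * C)
      ≤ ∫⁻ θ in Ioo (-π) π, F (r, θ) := by
    intro r hr
    have : ∫⁻ θ in Ioo (-π) π, F (r, θ)
        = ENNReal.ofReal r * ∫⁻ θ in Ioo (-π) π, g (circleMap 0 r θ) := by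
      exact lintegral_const_mul' _ _ ENNReal.ofReal_ne_top
    rw [this]
    exact mul_le_mul_right (circle_bound f hf p hp (mem_Ioi.mp hr)) _
  have hmono : ∫⁻ r in Ioi (0:ℝ), ENNReal.ofReal r * (T * C) ≤ ∫⁻ z, g z := by
    rw [← hiter]
    exact setLIntegral_mono' measurableSet_Ioi hlow
  have hinf : ∫⁻ r in Ioi (0:ℝ), ENNReal.ofReal r * (T * C) = ⊤ := by
    rw [lintegral_mul_const' (T * C) _ hTCtop]
    have hTop : ∫⁻ r in Ioi (0:ℝ), ENNReal.ofReal r = ⊤ := by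
      refine top_le_iff.mp ?_
      calc (⊤ : ℝ≥0∞) = volume (Ioi (1:ℝ)) := Real.volume_Ioi.symm
        _ = ∫⁻ _ in Ioi (1:ℝ), 1 := (setLIntegral_one _).symm
        _ ≤ ∫⁻ r in Ioi (1:ℝ), ENNReal.ofReal r :=
            setLIntegral_mono' measurableSet_Ioi fun x hx => by
              rw [ENNReal.one_le_ofReal]; linarith [mem_Ioi.mp hx]
        _ ≤ ∫⁻ r in Ioi (0:ℝ), ENNReal.ofReal r :=
            lintegral_mono_set (Ioi_subset_Ioi (by norm_num))
    rw [hTop, ENNReal.top_mul hTC]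
  rw [hinf] at hmono
  exact absurd (lt_of_le_of_lt hmono hint) (lt_irrefl _)


end LpLiouville

end LpLiouvilleAux

/-- An `L^p` Liouville theorem: an entire function `f : ℂ → ℂ` with
`∫_ℂ |f|^p dA < ∞` for some `p ≥ 1` (Lebesgue measure on `ℂ ≅ ℝ²`) is
identically zero. -/
theorem entire_Lp_implies_zero
    (f : ℂ → ℂ) (hf : Differentiable ℂ f)
    (p : ℝ) (hp : 1 ≤ p)
    (hint : ∫⁻ z : ℂ, ENNReal.ofReal (‖f z‖ ^ p) < ⊤) :
    ∀ z : ℂ, f z = 0 := by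
  intro z
  have h := LpLiouville.key_zero (fun w => f (w + z))
    (hf.comp (differentiable_id.add_const z)) p hp ?_
  · simpa using h
  · have : ∫⁻ w : ℂ, ENNReal.ofReal (‖f (w + z)‖ ^ p)
        = ∫⁻ w : ℂ, ENNReal.ofReal (‖f w‖ ^ p) :=
      lintegral_add_right_eq_self (fun w => ENNReal.ofReal (‖f w‖ ^ p)) z
    rw [this]
    exact hint
end
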